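/- Let (Ψ₁,Ψ₂,Ψ₃) be the standard paraquaternionic structure on V and let κ₁, κ₂, κ₃ ∈ ℝ satisfy κ₁ + κ₂ ≠ 0, κ₁ + κ₃ ≠ 0, and κ₂ ≠ κ₃ (so that the eigenvalues 3κ₁, −3κ₂, −3κ₃ are all distinct). Let A = κ₁A^{Ψ₁} + κ₂A^{Ψ₂} + κ₃A^{Ψ₃}. Then the model 𝔐 = (V,⟨·,·⟩,A) is null Jordan Osserman if and only if κ₂κ₃(κ₁+κ₂)(κ₁+κ₃) > 0. -/

import Mathlib

open Matrix BigOperators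

/-- `V = ℝ⁴`. -/
abbrev V4 : Type := Fin 4 → ℝ

/-- The neutral inner product of signature (2,2):
`⟨x,y⟩ = −x₁y₁ − x₂y₂ + x₃y₃ + x₄y₄`. -/
def nip (x y : V4) : ℝ := -(x 0 * y 0) - x 1 * y 1 + x 2 * y 2 + x 3 * y 3

/-- The signs `ε₁ = ε₂ = −1`, `ε₃ = ε₄ = 1`. -/
def eps : Fin 4 → ℝ := ![-1, -1, 1, 1]

/-- The standard basis vectors `e i`. -/
def stdb (i : Fin 4) : V4 := fun j => if j = i then 1 else 0

/-- A 4-linear map `A : V⁴ → ℝ` (linearity in each slot). -/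
def IsMultilinear (A : V4 → V4 → V4 → V4 → ℝ) : Prop :=
  (∀ (c : ℝ) (x x' y z w : V4), A (c • x + x') y z w = c * A x y z w + A x' y z w) ∧
  (∀ (c : ℝ) (x y y' z w : V4), A x (c • y + y') z w = c * A x y z w + A x y' z w) ∧
  (∀ (c : ℝ) (x y z z' w : V4), A x y (c • z + z') w = c * A x y z w + A x y z' w) ∧
  (∀ (c : ℝ) (x y z w w' : V4), A x y z (c • w + w') = c * A x y z w + A x y z w')

/-- Curvature symmetries:
`A(x,y,z,v) = −A(y,x,z,v) = A(z,v,x,y)` and the first Bianchi identity. -/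
def HasCurvSym (A : V4 → V4 → V4 → V4 → ℝ) : Prop :=
  (∀ x y z w, A x y z w = - A y x z w) ∧
  (∀ x y z w, A x y z w = A z w x y) ∧
  (∀ x y z w, A x y z w + A y z x w + A z x y w = 0)

/-- An algebraic curvature tensor on `(V,⟨·,·⟩)`. -/
def IsModel (A : V4 → V4 → V4 → V4 → ℝ) : Prop := IsMultilinear A ∧ HasCurvSym A

/-- The Jacobi operator `J_A(x)`, as a matrix: it is the unique linear map with
`⟨J_A(x)y, z⟩ = A(y,x,x,z)`; its matrix entries are `J i j = ε i * A(e j, x, x, e i)`. -/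
def jacobi (A : V4 → V4 → V4 → V4 → ℝ) (x : V4) : Matrix (Fin 4) (Fin 4) ℝ :=
  Matrix.of fun i j => eps i * A (stdb j) x x (stdb i)

/-- Two endomorphisms of `V` are similar (conjugate by an invertible linear map). -/
def SimilarM4 (M N : Matrix (Fin 4) (Fin 4) ℝ) : Prop :=
  ∃ L : Matrix (Fin 4) (Fin 4) ℝ, IsUnit L.det ∧ M * L = L * N

/-- Spacelike Osserman: the characteristic polynomial of `J_A` is constant on
unit spacelike vectors. -/
def SpacelikeOsserman (A : V4 → V4 → V4 → V4 → ℝ) : Prop :=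
  ∀ u w : V4, nip u u = 1 → nip w w = 1 → (jacobi A u).charpoly = (jacobi A w).charpoly

/-- Timelike Osserman: the characteristic polynomial of `J_A` is constant on
unit timelike vectors. -/
def TimelikeOsserman (A : V4 → V4 → V4 → V4 → ℝ) : Prop :=
  ∀ u w : V4, nip u u = -1 → nip w w = -1 → (jacobi A u).charpoly = (jacobi A w).charpoly

/-- Null Osserman: `J_A(v)` is nilpotent for every null vector `v`. -/
def NullOsserman (A : V4 → V4 → V4 → V4 → ℝ) : Prop :=
  ∀ v : V4, nip v v = 0 → IsNilpotent (jacobi A v)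

/-- Spacelike Jordan Osserman: the Jordan normal form of `J_A` is constant on
unit spacelike vectors. -/
def SpacelikeJordanOsserman (A : V4 → V4 → V4 → V4 → ℝ) : Prop :=
  ∀ u w : V4, nip u u = 1 → nip w w = 1 → SimilarM4 (jacobi A u) (jacobi A w)

/-- Timelike Jordan Osserman. -/
def TimelikeJordanOsserman (A : V4 → V4 → V4 → V4 → ℝ) : Prop :=
  ∀ u w : V4, nip u u = -1 → nip w w = -1 → SimilarM4 (jacobi A u) (jacobi A w)

/-- Null Jordan Osserman: the Jordan normal form of `J_A` is constant on
nonzero null vectors. -/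
def NullJordanOsserman (A : V4 → V4 → V4 → V4 → ℝ) : Prop :=
  ∀ u w : V4, u ≠ 0 → w ≠ 0 → nip u u = 0 → nip w w = 0 →
    SimilarM4 (jacobi A u) (jacobi A w)

/-- The Ricci tensor `ρ_A(x,y) = Σᵢ εᵢ A(eᵢ,x,y,eᵢ)`. -/
def ricci (A : V4 → V4 → V4 → V4 → ℝ) (x y : V4) : ℝ :=
  ∑ i : Fin 4, eps i * A (stdb i) x y (stdb i)

/-- Einstein: `ρ_A = c⟨·,·⟩`. -/
def Einstein (A : V4 → V4 → V4 → V4 → ℝ) : Prop :=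
  ∃ c : ℝ, ∀ x y : V4, ricci A x y = c * nip x y

/-- The scalar curvature `τ_A = Σᵢ εᵢ ρ_A(eᵢ,eᵢ)`. -/
def scal (A : V4 → V4 → V4 → V4 → ℝ) : ℝ :=
  ∑ i : Fin 4, eps i * ricci A (stdb i) (stdb i)

/-- The Weyl tensor. -/
noncomputable def weyl (A : V4 → V4 → V4 → V4 → ℝ) (x y z v : V4) : ℝ :=
  A x y z v + (scal A / 6) * (nip y z * nip x v - nip x z * nip y v)
    - (1/2) * (ricci A y z * nip x v - ricci A x z * nip y v
        + ricci A x v * nip y z - ricci A y v * nip x z)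

/-- A 2-vector `x ∧ y`, represented by its antisymmetric coefficient matrix. -/
def wedge (x y : V4) : Matrix (Fin 4) (Fin 4) ℝ :=
  Matrix.of fun i j => x i * y j - x j * y i

/-- The Weyl tensor as a symmetric bilinear form on 2-vectors, determined by
`W_A(x∧y, z∧v) = W_A(x,y,z,v)`. -/
noncomputable def weylForm (A : V4 → V4 → V4 → V4 → ℝ) (α β : Matrix (Fin 4) (Fin 4) ℝ) : ℝ :=
  (1/4) * ∑ i : Fin 4, ∑ j : Fin 4, ∑ k : Fin 4, ∑ l : Fin 4,
    α i j * β k l * weyl A (stdb i) (stdb j) (stdb k) (stdb l)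

/-- `E₁^ε = (1/√2)(e₁∧e₂ + ε e₃∧e₄)`, `E₂^ε = (1/√2)(e₁∧e₃ + ε e₂∧e₄)`,
`E₃^ε = (1/√2)(e₁∧e₄ − ε e₂∧e₃)`.  For `ε = 1` this is the standard basis of the
self-dual 2-vectors `Λ⁺`; for `ε = −1`, of the anti-self-dual 2-vectors `Λ⁻`. -/
noncomputable def Evec (ε : ℝ) : Fin 3 → Matrix (Fin 4) (Fin 4) ℝ :=
  ![(Real.sqrt 2)⁻¹ • (wedge (stdb 0) (stdb 1) + ε • wedge (stdb 2) (stdb 3)),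
    (Real.sqrt 2)⁻¹ • (wedge (stdb 0) (stdb 2) + ε • wedge (stdb 1) (stdb 3)),
    (Real.sqrt 2)⁻¹ • (wedge (stdb 0) (stdb 3) - ε • wedge (stdb 1) (stdb 2))]

/-- The space `Λ⁺` of self-dual 2-vectors. -/
def LambdaPlus : Submodule ℝ (Matrix (Fin 4) (Fin 4) ℝ) :=
  Submodule.span ℝ (Set.range (Evec 1))

/-- The space `Λ⁻` of anti-self-dual 2-vectors. -/
def LambdaMinus : Submodule ℝ (Matrix (Fin 4) (Fin 4) ℝ) :=
  Submodule.span ℝ (Set.range (Evec (-1)))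

/-- Self-dual: the Weyl form vanishes identically on `Λ⁻`. -/
def SelfDual (A : V4 → V4 → V4 → V4 → ℝ) : Prop :=
  ∀ α ∈ LambdaMinus, ∀ β ∈ LambdaMinus, weylForm A α β = 0

/-- Anti-self-dual: the Weyl form vanishes identically on `Λ⁺`. -/
def AntiSelfDual (A : V4 → V4 → V4 → V4 → ℝ) : Prop :=
  ∀ α ∈ LambdaPlus, ∀ β ∈ LambdaPlus, weylForm A α β = 0

/-- The curvature tensor `A⁰` of constant sectional curvature `+1`. -/
def Acurv0 (x y z v : V4) : ℝ := nip y z * nip x v - nip x z * nip y v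

/-- The curvature tensor `A^Ψ` of a skew-adjoint endomorphism `Ψ`. -/
def AcurvPsi (Ψ : Matrix (Fin 4) (Fin 4) ℝ) (x y z v : V4) : ℝ :=
  nip (Ψ.mulVec y) z * nip (Ψ.mulVec x) v - nip (Ψ.mulVec x) z * nip (Ψ.mulVec y) v
    - 2 * nip (Ψ.mulVec x) y * nip (Ψ.mulVec z) v

/-- Skew-adjoint with respect to the neutral inner product. -/
def SkewAdjointM (Ψ : Matrix (Fin 4) (Fin 4) ℝ) : Prop :=
  ∀ x y : V4, nip (Ψ.mulVec x) y = - nip x (Ψ.mulVec y)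

/-- An orthogonal complex structure: skew-adjoint with `J² = −id`. -/
def OrthComplexStructure (J : Matrix (Fin 4) (Fin 4) ℝ) : Prop :=
  SkewAdjointM J ∧ J * J = -1

/-- An adapted paracomplex structure: skew-adjoint with `P² = id`. -/
def AdaptedParaStructure (P : Matrix (Fin 4) (Fin 4) ℝ) : Prop :=
  SkewAdjointM P ∧ P * P = 1

/-- A paraquaternionic structure. -/
def Paraquaternionic (P₁ P₂ P₃ : Matrix (Fin 4) (Fin 4) ℝ) : Prop :=
  SkewAdjointM P₁ ∧ SkewAdjointM P₂ ∧ SkewAdjointM P₃ ∧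
  P₁ * P₁ = -1 ∧ P₂ * P₂ = 1 ∧ P₃ * P₃ = 1 ∧
  P₁ * P₂ + P₂ * P₁ = 0 ∧ P₁ * P₃ + P₃ * P₁ = 0 ∧ P₂ * P₃ + P₃ * P₂ = 0

/-- The standard paraquaternionic structure: `Ψ₁`. -/
def psi1 : Matrix (Fin 4) (Fin 4) ℝ :=
  !![0, 1, 0, 0; -1, 0, 0, 0; 0, 0, 0, -1; 0, 0, 1, 0]

/-- The standard paraquaternionic structure: `Ψ₂`. -/
def psi2 : Matrix (Fin 4) (Fin 4) ℝ :=
  !![0, 0, 1, 0; 0, 0, 0, 1; 1, 0, 0, 0; 0, 1, 0, 0]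

/-- The standard paraquaternionic structure: `Ψ₃`. -/
def psi3 : Matrix (Fin 4) (Fin 4) ℝ :=
  !![0, 0, 0, 1; 0, 0, -1, 0; 0, -1, 0, 0; 1, 0, 0, 0]

/-- The curvature tensor `A_{κ₀,ξ}` of the Gilkey–Ivanova ansatz. -/
noncomputable def AKxi (κ₀ ξ11 ξ12 ξ13 ξ22 ξ23 ξ33 : ℝ) : V4 → V4 → V4 → V4 → ℝ :=
  fun x y z w =>
    κ₀ * Acurv0 x y z w + (1/3) *
      (ξ11 * AcurvPsi psi1 x y z w + ξ22 * AcurvPsi psi2 x y z w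
        + ξ33 * AcurvPsi psi3 x y z w + ξ12 * AcurvPsi (psi1 + psi2) x y z w
        + ξ13 * AcurvPsi (psi1 + psi3) x y z w + ξ23 * AcurvPsi (psi2 + psi3) x y z w)

/-- The `3 × 3` matrix `𝒥_{κ₀,ξ}`. -/
def Jmat (κ₀ ξ11 ξ12 ξ13 ξ22 ξ23 ξ33 : ℝ) : Matrix (Fin 3) (Fin 3) ℝ :=
  κ₀ • (1 : Matrix (Fin 3) (Fin 3) ℝ) +
    !![ξ11 + ξ12 + ξ13, -ξ12, -ξ13;
       ξ12, -ξ22 - ξ12 - ξ23, -ξ23;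
       ξ13, -ξ23, -ξ33 - ξ13 - ξ23]

/-- An oriented orthonormal basis of `(V,⟨·,·⟩)`: `b₁, b₂` timelike, `b₃, b₄` spacelike,
mutually orthogonal, with positively-oriented change-of-basis matrix. -/
def OrientedONB (b : Fin 4 → V4) : Prop :=
  (∀ i j : Fin 4, nip (b i) (b j) = if i = j then eps i else 0) ∧
  0 < (Matrix.of fun i j : Fin 4 => b j i).det

def JM (k1 k2 k3 : ℝ) (u : V4) : Matrix (Fin 4) (Fin 4) ℝ :=
  !![(-3)*k1*(u 1)^2 + (-3)*k2*(u 2)^2 + (-3)*k3*(u 3)^2, 3*k1*(u 0)*(u 1) + (-3)*k2*(u 2)*(u 3) + 3*k3*(u 2)*(u 3), (-3)*k1*(u 1)*(u 3) + 3*k2*(u 0)*(u 2) + (-3)*k3*(u 1)*(u 3), 3*k1*(u 1)*(u 2) + 3*k2*(u 1)*(u 2) + 3*k3*(u 0)*(u 3);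
    3*k1*(u 0)*(u 1) + (-3)*k2*(u 2)*(u 3) + 3*k3*(u 2)*(u 3), (-3)*k1*(u 0)^2 + (-3)*k2*(u 3)^2 + (-3)*k3*(u 2)^2, 3*k1*(u 0)*(u 3) + 3*k2*(u 0)*(u 3) + 3*k3*(u 1)*(u 2), (-3)*k1*(u 0)*(u 2) + 3*k2*(u 1)*(u 3) + (-3)*k3*(u 0)*(u 2);
    3*k1*(u 1)*(u 3) + (-3)*k2*(u 0)*(u 2) + 3*k3*(u 1)*(u 3), (-3)*k1*(u 0)*(u 3) + (-3)*k2*(u 0)*(u 3) + (-3)*k3*(u 1)*(u 2), 3*k1*(u 3)^2 + 3*k2*(u 0)^2 + 3*k3*(u 1)^2, (-3)*k1*(u 2)*(u 3) + 3*k2*(u 0)*(u 1) + (-3)*k3*(u 0)*(u 1);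
    (-3)*k1*(u 1)*(u 2) + (-3)*k2*(u 1)*(u 2) + (-3)*k3*(u 0)*(u 3), 3*k1*(u 0)*(u 2) + (-3)*k2*(u 1)*(u 3) + 3*k3*(u 0)*(u 2), (-3)*k1*(u 2)*(u 3) + 3*k2*(u 0)*(u 1) + (-3)*k3*(u 0)*(u 1), 3*k1*(u 2)^2 + 3*k2*(u 1)^2 + 3*k3*(u 0)^2]

set_option maxHeartbeats 3200000 in
lemma jacobi_eq (k1 k2 k3 : ℝ) (u : V4) :
    jacobi (fun x y z w => k1 * AcurvPsi psi1 x y z w + k2 * AcurvPsi psi2 x y z w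
      + k3 * AcurvPsi psi3 x y z w) u = JM k1 k2 k3 u := by
  ext i j
  fin_cases i <;> fin_cases j <;>
    · simp [jacobi, JM, AcurvPsi, nip, stdb, eps, psi1, psi2, psi3,
        Matrix.mulVec, dotProduct, Fin.sum_univ_four]
      ring
def cmt (M : Matrix (Fin 4) (Fin 4) ℝ) (y1 y2 : V4) : Matrix (Fin 4) (Fin 4) ℝ :=
  Matrix.of fun i k => ![M.mulVec y1 i, y1 i, M.mulVec y2 i, y2 i] k

set_option maxHeartbeats 3200000 in
lemma det_cmt_e01 (k1 k2 k3 : ℝ) (u : V4) :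
    (cmt (JM k1 k2 k3 u) ![1,0,0,0] ![0,1,0,0]).det
      = 9*((k2*(k1+k3))*(u 0*u 2 + u 1*u 3)^2 + (k3*(k1+k2))*(u 0*u 3 - u 1*u 2)^2) := by
  simp [cmt, JM, Matrix.mulVec, dotProduct, Fin.sum_univ_four,
    Matrix.det_succ_row_zero, Fin.sum_univ_succ, Fin.succAbove]
  ring
set_option maxHeartbeats 3200000 in
lemma JM_sq (k1 k2 k3 : ℝ) (u : V4) (hn : nip u u = 0) :
    JM k1 k2 k3 u * JM k1 k2 k3 u = 0 := by
  have hn' : -(u 0 * u 0) - u 1 * u 1 + u 2 * u 2 + u 3 * u 3 = 0 := hn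
  ext i j
  fin_cases i <;> fin_cases j <;>
    simp [JM, Matrix.mul_apply, Fin.sum_univ_four]
  · linear_combination ((-9)*k1^2*(u 1)^2 + 9*k2^2*(u 2)^2 + 9*k3^2*(u 3)^2) * hn'
  · linear_combination (9*k1^2*(u 0)*(u 1) + 9*k2^2*(u 2)*(u 3) + (-9)*k3^2*(u 2)*(u 3)) * hn'
  · linear_combination ((-9)*k1^2*(u 1)*(u 3) + (-9)*k2^2*(u 0)*(u 2) + 9*k3^2*(u 1)*(u 3)) * hn'
  · linear_combination (9*k1^2*(u 1)*(u 2) + (-9)*k2^2*(u 1)*(u 2) + (-9)*k3^2*(u 0)*(u 3)) * hn'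
  · linear_combination (9*k1^2*(u 0)*(u 1) + 9*k2^2*(u 2)*(u 3) + (-9)*k3^2*(u 2)*(u 3)) * hn'
  · linear_combination ((-9)*k1^2*(u 0)^2 + 9*k2^2*(u 3)^2 + 9*k3^2*(u 2)^2) * hn'
  · linear_combination (9*k1^2*(u 0)*(u 3) + (-9)*k2^2*(u 0)*(u 3) + (-9)*k3^2*(u 1)*(u 2)) * hn'
  · linear_combination ((-9)*k1^2*(u 0)*(u 2) + (-9)*k2^2*(u 1)*(u 3) + 9*k3^2*(u 0)*(u 2)) * hn'
  · linear_combination (9*k1^2*(u 1)*(u 3) + 9*k2^2*(u 0)*(u 2) + (-9)*k3^2*(u 1)*(u 3)) * hn'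
  · linear_combination ((-9)*k1^2*(u 0)*(u 3) + 9*k2^2*(u 0)*(u 3) + 9*k3^2*(u 1)*(u 2)) * hn'
  · linear_combination (9*k1^2*(u 3)^2 + (-9)*k2^2*(u 0)^2 + (-9)*k3^2*(u 1)^2) * hn'
  · linear_combination ((-9)*k1^2*(u 2)*(u 3) + (-9)*k2^2*(u 0)*(u 1) + 9*k3^2*(u 0)*(u 1)) * hn'
  · linear_combination ((-9)*k1^2*(u 1)*(u 2) + 9*k2^2*(u 1)*(u 2) + 9*k3^2*(u 0)*(u 3)) * hn'
  · linear_combination (9*k1^2*(u 0)*(u 2) + 9*k2^2*(u 1)*(u 3) + (-9)*k3^2*(u 0)*(u 2)) * hn'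
  · linear_combination ((-9)*k1^2*(u 2)*(u 3) + (-9)*k2^2*(u 0)*(u 1) + 9*k3^2*(u 0)*(u 1)) * hn'
  · linear_combination (9*k1^2*(u 2)^2 + (-9)*k2^2*(u 1)^2 + (-9)*k3^2*(u 0)^2) * hn'
lemma similar_symm {M N : Matrix (Fin 4) (Fin 4) ℝ} (h : SimilarM4 M N) : SimilarM4 N M := by
  obtain ⟨L, hL, he⟩ := h
  refine ⟨L⁻¹, L.isUnit_nonsing_inv_det hL, ?_⟩
  have h1 : L * L⁻¹ = 1 := Matrix.mul_nonsing_inv L hL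
  have h2 : L⁻¹ * L = 1 := Matrix.nonsing_inv_mul L hL
  calc N * L⁻¹ = L⁻¹ * L * N * L⁻¹ := by rw [h2, Matrix.one_mul]
    _ = L⁻¹ * (M * L) * L⁻¹ := by rw [Matrix.mul_assoc (L⁻¹) L N, ← he]
    _ = L⁻¹ * M * (L * L⁻¹) := by rw [Matrix.mul_assoc, Matrix.mul_assoc, Matrix.mul_assoc]
    _ = L⁻¹ * M := by rw [h1, Matrix.mul_one]

lemma similar_trans {M N K : Matrix (Fin 4) (Fin 4) ℝ} (h : SimilarM4 M N) (h' : SimilarM4 N K) :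
    SimilarM4 M K := by
  obtain ⟨L, hL, he⟩ := h
  obtain ⟨L', hL', he'⟩ := h'
  refine ⟨L * L', by rw [Matrix.det_mul]; exact hL.mul hL', ?_⟩
  calc M * (L * L') = M * L * L' := by rw [Matrix.mul_assoc]
    _ = L * N * L' := by rw [he]
    _ = L * (N * L') := by rw [Matrix.mul_assoc]
    _ = L * (L' * K) := by rw [he']
    _ = L * L' * K := by rw [Matrix.mul_assoc]

def NN : Matrix (Fin 4) (Fin 4) ℝ := !![0,1,0,0; 0,0,0,0; 0,0,0,1; 0,0,0,0]

lemma sim_NN {M : Matrix (Fin 4) (Fin 4) ℝ} (h2 : M * M = 0) (y1 y2 : V4)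
    (hd : IsUnit (cmt M y1 y2).det) : SimilarM4 M NN := by
  refine ⟨cmt M y1 y2, hd, ?_⟩
  have hz1 : M.mulVec (M.mulVec y1) = 0 := by
    rw [Matrix.mulVec_mulVec, h2, Matrix.zero_mulVec]
  have hz2 : M.mulVec (M.mulVec y2) = 0 := by
    rw [Matrix.mulVec_mulVec, h2, Matrix.zero_mulVec]
  ext i k
  have e1 := congrFun hz1 i
  have e2 := congrFun hz2 i
  simp only [Matrix.mulVec, dotProduct, Fin.sum_univ_four, Pi.zero_apply] at e1 e2
  fin_cases k
  · simp [cmt, NN, Matrix.mul_apply, Matrix.mulVec, dotProduct, Fin.sum_univ_four,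
      Matrix.vecHead, Matrix.vecTail]
    linear_combination e1
  · simp [cmt, NN, Matrix.mul_apply, Matrix.mulVec, dotProduct, Fin.sum_univ_four,
      Matrix.vecHead, Matrix.vecTail]
  · simp [cmt, NN, Matrix.mul_apply, Matrix.mulVec, dotProduct, Fin.sum_univ_four,
      Matrix.vecHead, Matrix.vecTail]
    linear_combination e2
  · simp [cmt, NN, Matrix.mul_apply, Matrix.mulVec, dotProduct, Fin.sum_univ_four,
      Matrix.vecHead, Matrix.vecTail]

lemma cmt_transfer {M N : Matrix (Fin 4) (Fin 4) ℝ} {y1 y2 : V4} (h : SimilarM4 M N)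
    (hd : IsUnit (cmt N y1 y2).det) : ∃ z1 z2, IsUnit (cmt M z1 z2).det := by
  obtain ⟨L, hL, he⟩ := h
  refine ⟨L.mulVec y1, L.mulVec y2, ?_⟩
  have key : cmt M (L.mulVec y1) (L.mulVec y2) = L * cmt N y1 y2 := by
    have h1 : M.mulVec (L.mulVec y1) = L.mulVec (N.mulVec y1) := by
      rw [Matrix.mulVec_mulVec, he, ← Matrix.mulVec_mulVec]
    have h2 : M.mulVec (L.mulVec y2) = L.mulVec (N.mulVec y2) := by
      rw [Matrix.mulVec_mulVec, he, ← Matrix.mulVec_mulVec]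
    ext i k
    have e1 := congrFun h1 i
    have e2 := congrFun h2 i
    fin_cases k <;>
      simp only [cmt, Matrix.of_apply, Matrix.mul_apply, Matrix.mulVec, dotProduct,
        Fin.sum_univ_four] at e1 e2 ⊢ <;>
      simp [e1, e2, Matrix.mulVec, dotProduct, Fin.sum_univ_four]
  rw [key, Matrix.det_mul]
  exact hL.mul hd
set_option maxRecDepth 8000 in
set_option maxHeartbeats 3200000 in
lemma caseA (k1 k2 k3 : ℝ) (hk2 : k2 = 0) (y1 y2 : V4) :
    (cmt (JM k1 k2 k3 ![1,0,1,0]) y1 y2).det = 0 := by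
  simp [cmt, JM, Matrix.mulVec, dotProduct, Fin.sum_univ_four,
    Matrix.det_succ_row_zero, Fin.sum_univ_succ, Fin.succAbove,
    show (Fin.succ 2 : Fin 4) = 3 from rfl, show (Fin.castSucc 2 : Fin 4) = 2 from rfl,
    show (Fin.succ 0 : Fin 4) = 1 from rfl, show (Fin.succ 1 : Fin 4) = 2 from rfl,
    show (Fin.castSucc 0 : Fin 4) = 0 from rfl, show (Fin.castSucc 1 : Fin 4) = 1 from rfl]
  linear_combination ((-18)*(y1 0)*(y1 1)*(y2 0)*(y2 1)*k1 + (-18)*(y1 0)*(y1 1)*(y2 0)*(y2 1)*k3 + (-18)*(y1 0)*(y1 1)*(y2 0)*(y2 3)*k1 + (-18)*(y1 0)*(y1 1)*(y2 0)*(y2 3)*k3 + 18*(y1 0)*(y1 1)*(y2 1)*(y2 2)*k1 + 18*(y1 0)*(y1 1)*(y2 1)*(y2 2)*k3 + 18*(y1 0)*(y1 1)*(y2 2)*(y2 3)*k1 + 18*(y1 0)*(y1 1)*(y2 2)*(y2 3)*k3 + (-36)*(y1 0)*(y1 2)*(y2 1)*(y2 3)*k1 + (-36)*(y1 0)*(y1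 2)*(y2 1)*(y2 3)*k3 + (-18)*(y1 0)*(y1 2)*(y2 1)^2*k1 + (-18)*(y1 0)*(y1 2)*(y2 1)^2*k3 + (-18)*(y1 0)*(y1 2)*(y2 3)^2*k1 + (-18)*(y1 0)*(y1 2)*(y2 3)^2*k3 + (-18)*(y1 0)*(y1 3)*(y2 0)*(y2 1)*k1 + (-18)*(y1 0)*(y1 3)*(y2 0)*(y2 1)*k3 + (-18)*(y1 0)*(y1 3)*(y2 0)*(y2 3)*k1 + (-18)*(y1 0)*(y1 3)*(y2 0)*(y2 3)*k3 + 18*(y1 0)*(y1 3)*(y2 1)*(y2 2)*k1 + 18*(y1 0)*(y1 3)*(y2 1)*(y2 2)*k3 + 18*(y1 0)*(y1 3)*(y2 2)*(y2 3)*k1 + 18*(y1 0)*(y1 3)*(y2 2)*(y2 3)*k3 + 18*(y1 0)^2*(y2 1)*(y2 3)*k1 + 18*(y1 0)^2*(y2 1)*(y2 3)*k3 + 9*(y1 0)^2*(y2 1)^2*k1 + 9*(y1 0)^2*(y2 1)^2*k3 + 9*(y1 0)^2*(y2 3)^2*k1 + 9*(y1 0)^2*(y2 3)^2*k3 + 18*(y1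 1)*(y1 2)*(y2 0)*(y2 1)*k1 + 18*(y1 1)*(y1 2)*(y2 0)*(y2 1)*k3 + 18*(y1 1)*(y1 2)*(y2 0)*(y2 3)*k1 + 18*(y1 1)*(y1 2)*(y2 0)*(y2 3)*k3 + (-18)*(y1 1)*(y1 2)*(y2 1)*(y2 2)*k1 + (-18)*(y1 1)*(y1 2)*(y2 1)*(y2 2)*k3 + (-18)*(y1 1)*(y1 2)*(y2 2)*(y2 3)*k1 + (-18)*(y1 1)*(y1 2)*(y2 2)*(y2 3)*k3 + (-36)*(y1 1)*(y1 3)*(y2 0)*(y2 2)*k1 + (-36)*(y1 1)*(y1 3)*(y2 0)*(y2 2)*k3 + 18*(y1 1)*(y1 3)*(y2 0)^2*k1 + 18*(y1 1)*(y1 3)*(y2 0)^2*k3 + 18*(y1 1)*(y1 3)*(y2 2)^2*k1 + 18*(y1 1)*(y1 3)*(y2 2)^2*k3 + (-18)*(y1 1)^2*(y2 0)*(y2 2)*k1 + (-18)*(y1 1)^2*(y2 0)*(y2 2)*k3 + 9*(y1 1)^2*(y2 0)^2*k1 + 9*(y1 1)^2*(y2 0)^2*k3 + 9*(y1 1)^2*(y2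 2)^2*k1 + 9*(y1 1)^2*(y2 2)^2*k3 + 18*(y1 2)*(y1 3)*(y2 0)*(y2 1)*k1 + 18*(y1 2)*(y1 3)*(y2 0)*(y2 1)*k3 + 18*(y1 2)*(y1 3)*(y2 0)*(y2 3)*k1 + 18*(y1 2)*(y1 3)*(y2 0)*(y2 3)*k3 + (-18)*(y1 2)*(y1 3)*(y2 1)*(y2 2)*k1 + (-18)*(y1 2)*(y1 3)*(y2 1)*(y2 2)*k3 + (-18)*(y1 2)*(y1 3)*(y2 2)*(y2 3)*k1 + (-18)*(y1 2)*(y1 3)*(y2 2)*(y2 3)*k3 + 18*(y1 2)^2*(y2 1)*(y2 3)*k1 + 18*(y1 2)^2*(y2 1)*(y2 3)*k3 + 9*(y1 2)^2*(y2 1)^2*k1 + 9*(y1 2)^2*(y2 1)^2*k3 + 9*(y1 2)^2*(y2 3)^2*k1 + 9*(y1 2)^2*(y2 3)^2*k3 + (-18)*(y1 3)^2*(y2 0)*(y2 2)*k1 + (-18)*(y1 3)^2*(y2 0)*(y2 2)*k3 + 9*(y1 3)^2*(y2 0)^2*k1 + 9*(y1 3)^2*(y2 0)^2*k3 + 9*(y1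 3)^2*(y2 2)^2*k1 + 9*(y1 3)^2*(y2 2)^2*k3) * hk2

set_option maxRecDepth 8000 in
set_option maxHeartbeats 3200000 in
lemma caseB (k1 k2 k3 : ℝ) (hk3 : k3 = 0) (y1 y2 : V4) :
    (cmt (JM k1 k2 k3 ![1,0,0,1]) y1 y2).det = 0 := by
  simp [cmt, JM, Matrix.mulVec, dotProduct, Fin.sum_univ_four,
    Matrix.det_succ_row_zero, Fin.sum_univ_succ, Fin.succAbove,
    show (Fin.succ 2 : Fin 4) = 3 from rfl, show (Fin.castSucc 2 : Fin 4) = 2 from rfl,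
    show (Fin.succ 0 : Fin 4) = 1 from rfl, show (Fin.succ 1 : Fin 4) = 2 from rfl,
    show (Fin.castSucc 0 : Fin 4) = 0 from rfl, show (Fin.castSucc 1 : Fin 4) = 1 from rfl]
  linear_combination ((-18)*(y1 0)*(y1 1)*(y2 0)*(y2 1)*k1 + (-18)*(y1 0)*(y1 1)*(y2 0)*(y2 1)*k2 + 18*(y1 0)*(y1 1)*(y2 0)*(y2 2)*k1 + 18*(y1 0)*(y1 1)*(y2 0)*(y2 2)*k2 + 18*(y1 0)*(y1 1)*(y2 1)*(y2 3)*k1 + 18*(y1 0)*(y1 1)*(y2 1)*(y2 3)*k2 + (-18)*(y1 0)*(y1 1)*(y2 2)*(y2 3)*k1 + (-18)*(y1 0)*(y1 1)*(y2 2)*(y2 3)*k2 + 18*(y1 0)*(y1 2)*(y2 0)*(y2 1)*k1 + 18*(y1 0)*(y1 2)*(y2 0)*(y2 1)*k2 + (-18)*(y1 0)*(y1 2)*(y2 0)*(y2 2)*k1 + (-18)*(y1 0)*(y1 2)*(y2 0)*(y2 2)*k2 + (-18)*(y1 0)*(y1 2)*(y2 1)*(y2 3)*k1 + (-18)*(y1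 0)*(y1 2)*(y2 1)*(y2 3)*k2 + 18*(y1 0)*(y1 2)*(y2 2)*(y2 3)*k1 + 18*(y1 0)*(y1 2)*(y2 2)*(y2 3)*k2 + 36*(y1 0)*(y1 3)*(y2 1)*(y2 2)*k1 + 36*(y1 0)*(y1 3)*(y2 1)*(y2 2)*k2 + (-18)*(y1 0)*(y1 3)*(y2 1)^2*k1 + (-18)*(y1 0)*(y1 3)*(y2 1)^2*k2 + (-18)*(y1 0)*(y1 3)*(y2 2)^2*k1 + (-18)*(y1 0)*(y1 3)*(y2 2)^2*k2 + (-18)*(y1 0)^2*(y2 1)*(y2 2)*k1 + (-18)*(y1 0)^2*(y2 1)*(y2 2)*k2 + 9*(y1 0)^2*(y2 1)^2*k1 + 9*(y1 0)^2*(y2 1)^2*k2 + 9*(y1 0)^2*(y2 2)^2*k1 + 9*(y1 0)^2*(y2 2)^2*k2 + 36*(y1 1)*(y1 2)*(y2 0)*(y2 3)*k1 + 36*(y1 1)*(y1 2)*(y2 0)*(y2 3)*k2 + (-18)*(y1 1)*(y1 2)*(y2 0)^2*k1 + (-18)*(y1 1)*(y1 2)*(y2 0)^2*k2 + (-18)*(y1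 1)*(y1 2)*(y2 3)^2*k1 + (-18)*(y1 1)*(y1 2)*(y2 3)^2*k2 + 18*(y1 1)*(y1 3)*(y2 0)*(y2 1)*k1 + 18*(y1 1)*(y1 3)*(y2 0)*(y2 1)*k2 + (-18)*(y1 1)*(y1 3)*(y2 0)*(y2 2)*k1 + (-18)*(y1 1)*(y1 3)*(y2 0)*(y2 2)*k2 + (-18)*(y1 1)*(y1 3)*(y2 1)*(y2 3)*k1 + (-18)*(y1 1)*(y1 3)*(y2 1)*(y2 3)*k2 + 18*(y1 1)*(y1 3)*(y2 2)*(y2 3)*k1 + 18*(y1 1)*(y1 3)*(y2 2)*(y2 3)*k2 + (-18)*(y1 1)^2*(y2 0)*(y2 3)*k1 + (-18)*(y1 1)^2*(y2 0)*(y2 3)*k2 + 9*(y1 1)^2*(y2 0)^2*k1 + 9*(y1 1)^2*(y2 0)^2*k2 + 9*(y1 1)^2*(y2 3)^2*k1 + 9*(y1 1)^2*(y2 3)^2*k2 + (-18)*(y1 2)*(y1 3)*(y2 0)*(y2 1)*k1 + (-18)*(y1 2)*(y1 3)*(y2 0)*(y2 1)*k2 + 18*(y1 2)*(y1 3)*(y2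 0)*(y2 2)*k1 + 18*(y1 2)*(y1 3)*(y2 0)*(y2 2)*k2 + 18*(y1 2)*(y1 3)*(y2 1)*(y2 3)*k1 + 18*(y1 2)*(y1 3)*(y2 1)*(y2 3)*k2 + (-18)*(y1 2)*(y1 3)*(y2 2)*(y2 3)*k1 + (-18)*(y1 2)*(y1 3)*(y2 2)*(y2 3)*k2 + (-18)*(y1 2)^2*(y2 0)*(y2 3)*k1 + (-18)*(y1 2)^2*(y2 0)*(y2 3)*k2 + 9*(y1 2)^2*(y2 0)^2*k1 + 9*(y1 2)^2*(y2 0)^2*k2 + 9*(y1 2)^2*(y2 3)^2*k1 + 9*(y1 2)^2*(y2 3)^2*k2 + (-18)*(y1 3)^2*(y2 1)*(y2 2)*k1 + (-18)*(y1 3)^2*(y2 1)*(y2 2)*k2 + 9*(y1 3)^2*(y2 1)^2*k1 + 9*(y1 3)^2*(y2 1)^2*k2 + 9*(y1 3)^2*(y2 2)^2*k1 + 9*(y1 3)^2*(y2 2)^2*k2) * hk3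

set_option maxRecDepth 8000 in
set_option maxHeartbeats 6400000 in
lemma caseC (k1 k2 k3 x y r : ℝ) (hx : x^2 = -(k3*(k1+k2))) (hy : y^2 = k2*(k1+k3))
    (hr : r^2 = x^2 + y^2) (y1 y2 : V4) :
    (cmt (JM k1 k2 k3 ![r,0,x,y]) y1 y2).det = 0 := by
  simp [cmt, JM, Matrix.mulVec, dotProduct, Fin.sum_univ_four,
    Matrix.det_succ_row_zero, Fin.sum_univ_succ, Fin.succAbove,
    show (Fin.succ 2 : Fin 4) = 3 from rfl, show (Fin.castSucc 2 : Fin 4) = 2 from rfl,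
    show (Fin.succ 0 : Fin 4) = 1 from rfl, show (Fin.succ 1 : Fin 4) = 2 from rfl,
    show (Fin.castSucc 0 : Fin 4) = 0 from rfl, show (Fin.castSucc 1 : Fin 4) = 1 from rfl]
  linear_combination ((-18)*(y1 0)*(y1 1)*(y2 0)*(y2 1)*k1*k2*x^2 + (-18)*(y1 0)*(y1 1)*(y2 0)*(y2 1)*k1*k3*y^2 + (-18)*(y1 0)*(y1 1)*(y2 0)*(y2 1)*k2*k3*x^2 + (-18)*(y1 0)*(y1 1)*(y2 0)*(y2 1)*k2*k3*y^2 + 9*(y1 0)*(y1 1)*(y2 0)*(y2 2)*k1*k3*r*y + 9*(y1 0)*(y1 1)*(y2 0)*(y2 2)*k2*k3*r*y + (-9)*(y1 0)*(y1 1)*(y2 0)*(y2 3)*k1*k2*r*x + (-9)*(y1 0)*(y1 1)*(y2 0)*(y2 3)*k2*k3*r*x + 9*(y1 0)*(y1 1)*(y2 1)*(y2 2)*k1*k2*r*x + 9*(y1 0)*(y1 1)*(y2 1)*(y2 2)*k2*k3*r*x + 9*(y1 0)*(y1 1)*(y2 1)*(y2 3)*k1*k3*r*y + 9*(y1 0)*(y1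 1)*(y2 1)*(y2 3)*k2*k3*r*y + 9*(y1 0)*(y1 1)*(y2 2)*(y2 3)*k1*k2*r^2 + 9*(y1 0)*(y1 1)*(y2 2)*(y2 3)*k1*k2*x^2 + (-9)*(y1 0)*(y1 1)*(y2 2)*(y2 3)*k1*k2*y^2 + (-9)*(y1 0)*(y1 1)*(y2 2)*(y2 3)*k1*k3*r^2 + 9*(y1 0)*(y1 1)*(y2 2)*(y2 3)*k1*k3*x^2 + (-9)*(y1 0)*(y1 1)*(y2 2)*(y2 3)*k1*k3*y^2 + 18*(y1 0)*(y1 1)*(y2 2)*(y2 3)*k2*k3*x^2 + (-18)*(y1 0)*(y1 1)*(y2 2)*(y2 3)*k2*k3*y^2 + (-9)*(y1 0)*(y1 1)*(y2 2)^2*k1*k2*x*y + (-9)*(y1 0)*(y1 1)*(y2 2)^2*k1*k3*x*y + (-18)*(y1 0)*(y1 1)*(y2 2)^2*k2*k3*x*y + 9*(y1 0)*(y1 1)*(y2 3)^2*k1*k2*x*y + 9*(y1 0)*(y1 1)*(y2 3)^2*k1*k3*x*y + 18*(y1 0)*(y1 1)*(y2 3)^2*k2*k3*x*y + 9*(y1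 0)*(y1 2)*(y2 0)*(y2 1)*k1*k3*r*y + 9*(y1 0)*(y1 2)*(y2 0)*(y2 1)*k2*k3*r*y + (-18)*(y1 0)*(y1 2)*(y2 0)*(y2 2)*k1*k3*y^2 + (-18)*(y1 0)*(y1 2)*(y2 0)*(y2 2)*k2*k3*y^2 + 9*(y1 0)*(y1 2)*(y2 0)*(y2 3)*k1*k2*x*y + 9*(y1 0)*(y1 2)*(y2 0)*(y2 3)*k1*k3*x*y + 18*(y1 0)*(y1 2)*(y2 0)*(y2 3)*k2*k3*x*y + 9*(y1 0)*(y1 2)*(y2 1)*(y2 2)*k1*k2*x*y + 9*(y1 0)*(y1 2)*(y2 1)*(y2 2)*k1*k3*x*y + 18*(y1 0)*(y1 2)*(y2 1)*(y2 2)*k2*k3*x*y + (-9)*(y1 0)*(y1 2)*(y2 1)*(y2 3)*k1*k2*r^2 + (-27)*(y1 0)*(y1 2)*(y2 1)*(y2 3)*k1*k2*x^2 + 9*(y1 0)*(y1 2)*(y2 1)*(y2 3)*k1*k2*y^2 + (-18)*(y1 0)*(y1 2)*(y2 1)*(y2 3)*k1*k3*y^2 + (-9)*(y1 0)*(y1 2)*(y2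 1)*(y2 3)*k2*k3*r^2 + (-27)*(y1 0)*(y1 2)*(y2 1)*(y2 3)*k2*k3*x^2 + (-9)*(y1 0)*(y1 2)*(y2 1)*(y2 3)*k2*k3*y^2 + (-9)*(y1 0)*(y1 2)*(y2 1)^2*k1*k2*r*x + (-9)*(y1 0)*(y1 2)*(y2 1)^2*k2*k3*r*x + 9*(y1 0)*(y1 2)*(y2 2)*(y2 3)*k1*k3*r*y + 9*(y1 0)*(y1 2)*(y2 2)*(y2 3)*k2*k3*r*y + (-9)*(y1 0)*(y1 2)*(y2 3)^2*k1*k2*r*x + (-9)*(y1 0)*(y1 2)*(y2 3)^2*k2*k3*r*x + (-9)*(y1 0)*(y1 3)*(y2 0)*(y2 1)*k1*k2*r*x + (-9)*(y1 0)*(y1 3)*(y2 0)*(y2 1)*k2*k3*r*x + 9*(y1 0)*(y1 3)*(y2 0)*(y2 2)*k1*k2*x*y + 9*(y1 0)*(y1 3)*(y2 0)*(y2 2)*k1*k3*x*y + 18*(y1 0)*(y1 3)*(y2 0)*(y2 2)*k2*k3*x*y + (-18)*(y1 0)*(y1 3)*(y2 0)*(y2 3)*k1*k2*x^2 + (-18)*(y1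 0)*(y1 3)*(y2 0)*(y2 3)*k2*k3*x^2 + 18*(y1 0)*(y1 3)*(y2 1)*(y2 2)*k1*k2*x^2 + 9*(y1 0)*(y1 3)*(y2 1)*(y2 2)*k1*k3*r^2 + (-9)*(y1 0)*(y1 3)*(y2 1)*(y2 2)*k1*k3*x^2 + 27*(y1 0)*(y1 3)*(y2 1)*(y2 2)*k1*k3*y^2 + 9*(y1 0)*(y1 3)*(y2 1)*(y2 2)*k2*k3*r^2 + 9*(y1 0)*(y1 3)*(y2 1)*(y2 2)*k2*k3*x^2 + 27*(y1 0)*(y1 3)*(y2 1)*(y2 2)*k2*k3*y^2 + (-9)*(y1 0)*(y1 3)*(y2 1)*(y2 3)*k1*k2*x*y + (-9)*(y1 0)*(y1 3)*(y2 1)*(y2 3)*k1*k3*x*y + (-18)*(y1 0)*(y1 3)*(y2 1)*(y2 3)*k2*k3*x*y + (-9)*(y1 0)*(y1 3)*(y2 1)^2*k1*k3*r*y + (-9)*(y1 0)*(y1 3)*(y2 1)^2*k2*k3*r*y + 9*(y1 0)*(y1 3)*(y2 2)*(y2 3)*k1*k2*r*x + 9*(y1 0)*(y1 3)*(y2 2)*(y2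 3)*k2*k3*r*x + (-9)*(y1 0)*(y1 3)*(y2 2)^2*k1*k3*r*y + (-9)*(y1 0)*(y1 3)*(y2 2)^2*k2*k3*r*y + (-9)*(y1 0)^2*(y2 1)*(y2 2)*k1*k3*r*y + (-9)*(y1 0)^2*(y2 1)*(y2 2)*k2*k3*r*y + 9*(y1 0)^2*(y2 1)*(y2 3)*k1*k2*r*x + 9*(y1 0)^2*(y2 1)*(y2 3)*k2*k3*r*x + 9*(y1 0)^2*(y2 1)^2*k1*k2*x^2 + 9*(y1 0)^2*(y2 1)^2*k1*k3*y^2 + 9*(y1 0)^2*(y2 1)^2*k2*k3*x^2 + 9*(y1 0)^2*(y2 1)^2*k2*k3*y^2 + (-9)*(y1 0)^2*(y2 2)*(y2 3)*k1*k2*x*y + (-9)*(y1 0)^2*(y2 2)*(y2 3)*k1*k3*x*y + (-18)*(y1 0)^2*(y2 2)*(y2 3)*k2*k3*x*y + 9*(y1 0)^2*(y2 2)^2*k1*k3*y^2 + 9*(y1 0)^2*(y2 2)^2*k2*k3*y^2 + 9*(y1 0)^2*(y2 3)^2*k1*k2*x^2 + 9*(y1 0)^2*(y2 3)^2*k2*k3*x^2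 + 9*(y1 1)*(y1 2)*(y2 0)*(y2 1)*k1*k2*r*x + 9*(y1 1)*(y1 2)*(y2 0)*(y2 1)*k2*k3*r*x + 9*(y1 1)*(y1 2)*(y2 0)*(y2 2)*k1*k2*x*y + 9*(y1 1)*(y1 2)*(y2 0)*(y2 2)*k1*k3*x*y + 18*(y1 1)*(y1 2)*(y2 0)*(y2 2)*k2*k3*x*y + 18*(y1 1)*(y1 2)*(y2 0)*(y2 3)*k1*k2*x^2 + 9*(y1 1)*(y1 2)*(y2 0)*(y2 3)*k1*k3*r^2 + (-9)*(y1 1)*(y1 2)*(y2 0)*(y2 3)*k1*k3*x^2 + 27*(y1 1)*(y1 2)*(y2 0)*(y2 3)*k1*k3*y^2 + 9*(y1 1)*(y1 2)*(y2 0)*(y2 3)*k2*k3*r^2 + 9*(y1 1)*(y1 2)*(y2 0)*(y2 3)*k2*k3*x^2 + 27*(y1 1)*(y1 2)*(y2 0)*(y2 3)*k2*k3*y^2 + (-9)*(y1 1)*(y1 2)*(y2 0)^2*k1*k3*r*y + (-9)*(y1 1)*(y1 2)*(y2 0)^2*k2*k3*r*y + (-18)*(y1 1)*(y1 2)*(y2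 1)*(y2 2)*k1*k2*x^2 + (-18)*(y1 1)*(y1 2)*(y2 1)*(y2 2)*k2*k3*x^2 + (-9)*(y1 1)*(y1 2)*(y2 1)*(y2 3)*k1*k2*x*y + (-9)*(y1 1)*(y1 2)*(y2 1)*(y2 3)*k1*k3*x*y + (-18)*(y1 1)*(y1 2)*(y2 1)*(y2 3)*k2*k3*x*y + (-9)*(y1 1)*(y1 2)*(y2 2)*(y2 3)*k1*k2*r*x + (-9)*(y1 1)*(y1 2)*(y2 2)*(y2 3)*k2*k3*r*x + (-9)*(y1 1)*(y1 2)*(y2 3)^2*k1*k3*r*y + (-9)*(y1 1)*(y1 2)*(y2 3)^2*k2*k3*r*y + 9*(y1 1)*(y1 3)*(y2 0)*(y2 1)*k1*k3*r*y + 9*(y1 1)*(y1 3)*(y2 0)*(y2 1)*k2*k3*r*y + (-9)*(y1 1)*(y1 3)*(y2 0)*(y2 2)*k1*k2*r^2 + (-27)*(y1 1)*(y1 3)*(y2 0)*(y2 2)*k1*k2*x^2 + 9*(y1 1)*(y1 3)*(y2 0)*(y2 2)*k1*k2*y^2 + (-18)*(y1 1)*(y1 3)*(y2 0)*(y2 2)*k1*k3*y^2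 + (-9)*(y1 1)*(y1 3)*(y2 0)*(y2 2)*k2*k3*r^2 + (-27)*(y1 1)*(y1 3)*(y2 0)*(y2 2)*k2*k3*x^2 + (-9)*(y1 1)*(y1 3)*(y2 0)*(y2 2)*k2*k3*y^2 + (-9)*(y1 1)*(y1 3)*(y2 0)*(y2 3)*k1*k2*x*y + (-9)*(y1 1)*(y1 3)*(y2 0)*(y2 3)*k1*k3*x*y + (-18)*(y1 1)*(y1 3)*(y2 0)*(y2 3)*k2*k3*x*y + 9*(y1 1)*(y1 3)*(y2 0)^2*k1*k2*r*x + 9*(y1 1)*(y1 3)*(y2 0)^2*k2*k3*r*x + (-9)*(y1 1)*(y1 3)*(y2 1)*(y2 2)*k1*k2*x*y + (-9)*(y1 1)*(y1 3)*(y2 1)*(y2 2)*k1*k3*x*y + (-18)*(y1 1)*(y1 3)*(y2 1)*(y2 2)*k2*k3*x*y + (-18)*(y1 1)*(y1 3)*(y2 1)*(y2 3)*k1*k3*y^2 + (-18)*(y1 1)*(y1 3)*(y2 1)*(y2 3)*k2*k3*y^2 + 9*(y1 1)*(y1 3)*(y2 2)*(y2 3)*k1*k3*r*y + 9*(y1 1)*(y1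 3)*(y2 2)*(y2 3)*k2*k3*r*y + 9*(y1 1)*(y1 3)*(y2 2)^2*k1*k2*r*x + 9*(y1 1)*(y1 3)*(y2 2)^2*k2*k3*r*x + (-9)*(y1 1)^2*(y2 0)*(y2 2)*k1*k2*r*x + (-9)*(y1 1)^2*(y2 0)*(y2 2)*k2*k3*r*x + (-9)*(y1 1)^2*(y2 0)*(y2 3)*k1*k3*r*y + (-9)*(y1 1)^2*(y2 0)*(y2 3)*k2*k3*r*y + 9*(y1 1)^2*(y2 0)^2*k1*k2*x^2 + 9*(y1 1)^2*(y2 0)^2*k1*k3*y^2 + 9*(y1 1)^2*(y2 0)^2*k2*k3*x^2 + 9*(y1 1)^2*(y2 0)^2*k2*k3*y^2 + 9*(y1 1)^2*(y2 2)*(y2 3)*k1*k2*x*y + 9*(y1 1)^2*(y2 2)*(y2 3)*k1*k3*x*y + 18*(y1 1)^2*(y2 2)*(y2 3)*k2*k3*x*y + 9*(y1 1)^2*(y2 2)^2*k1*k2*x^2 + 9*(y1 1)^2*(y2 2)^2*k2*k3*x^2 + 9*(y1 1)^2*(y2 3)^2*k1*k3*y^2 + 9*(y1 1)^2*(y2 3)^2*k2*k3*y^2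 + 9*(y1 2)*(y1 3)*(y2 0)*(y2 1)*k1*k2*r^2 + 9*(y1 2)*(y1 3)*(y2 0)*(y2 1)*k1*k2*x^2 + (-9)*(y1 2)*(y1 3)*(y2 0)*(y2 1)*k1*k2*y^2 + (-9)*(y1 2)*(y1 3)*(y2 0)*(y2 1)*k1*k3*r^2 + 9*(y1 2)*(y1 3)*(y2 0)*(y2 1)*k1*k3*x^2 + (-9)*(y1 2)*(y1 3)*(y2 0)*(y2 1)*k1*k3*y^2 + 18*(y1 2)*(y1 3)*(y2 0)*(y2 1)*k2*k3*x^2 + (-18)*(y1 2)*(y1 3)*(y2 0)*(y2 1)*k2*k3*y^2 + 9*(y1 2)*(y1 3)*(y2 0)*(y2 2)*k1*k3*r*y + 9*(y1 2)*(y1 3)*(y2 0)*(y2 2)*k2*k3*r*y + 9*(y1 2)*(y1 3)*(y2 0)*(y2 3)*k1*k2*r*x + 9*(y1 2)*(y1 3)*(y2 0)*(y2 3)*k2*k3*r*x + (-9)*(y1 2)*(y1 3)*(y2 0)^2*k1*k2*x*y + (-9)*(y1 2)*(y1 3)*(y2 0)^2*k1*k3*x*y + (-18)*(y1 2)*(y1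 3)*(y2 0)^2*k2*k3*x*y + (-9)*(y1 2)*(y1 3)*(y2 1)*(y2 2)*k1*k2*r*x + (-9)*(y1 2)*(y1 3)*(y2 1)*(y2 2)*k2*k3*r*x + 9*(y1 2)*(y1 3)*(y2 1)*(y2 3)*k1*k3*r*y + 9*(y1 2)*(y1 3)*(y2 1)*(y2 3)*k2*k3*r*y + 9*(y1 2)*(y1 3)*(y2 1)^2*k1*k2*x*y + 9*(y1 2)*(y1 3)*(y2 1)^2*k1*k3*x*y + 18*(y1 2)*(y1 3)*(y2 1)^2*k2*k3*x*y + (-18)*(y1 2)*(y1 3)*(y2 2)*(y2 3)*k1*k2*x^2 + (-18)*(y1 2)*(y1 3)*(y2 2)*(y2 3)*k1*k3*y^2 + (-18)*(y1 2)*(y1 3)*(y2 2)*(y2 3)*k2*k3*x^2 + (-18)*(y1 2)*(y1 3)*(y2 2)*(y2 3)*k2*k3*y^2 + (-9)*(y1 2)^2*(y2 0)*(y2 1)*k1*k2*x*y + (-9)*(y1 2)^2*(y2 0)*(y2 1)*k1*k3*x*y + (-18)*(y1 2)^2*(y2 0)*(y2 1)*k2*k3*x*y + (-9)*(y1 2)^2*(y2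 0)*(y2 3)*k1*k3*r*y + (-9)*(y1 2)^2*(y2 0)*(y2 3)*k2*k3*r*y + 9*(y1 2)^2*(y2 0)^2*k1*k3*y^2 + 9*(y1 2)^2*(y2 0)^2*k2*k3*y^2 + 9*(y1 2)^2*(y2 1)*(y2 3)*k1*k2*r*x + 9*(y1 2)^2*(y2 1)*(y2 3)*k2*k3*r*x + 9*(y1 2)^2*(y2 1)^2*k1*k2*x^2 + 9*(y1 2)^2*(y2 1)^2*k2*k3*x^2 + 9*(y1 2)^2*(y2 3)^2*k1*k2*x^2 + 9*(y1 2)^2*(y2 3)^2*k1*k3*y^2 + 9*(y1 2)^2*(y2 3)^2*k2*k3*x^2 + 9*(y1 2)^2*(y2 3)^2*k2*k3*y^2 + 9*(y1 3)^2*(y2 0)*(y2 1)*k1*k2*x*y + 9*(y1 3)^2*(y2 0)*(y2 1)*k1*k3*x*y + 18*(y1 3)^2*(y2 0)*(y2 1)*k2*k3*x*y + (-9)*(y1 3)^2*(y2 0)*(y2 2)*k1*k2*r*x + (-9)*(y1 3)^2*(y2 0)*(y2 2)*k2*k3*r*x + 9*(y1 3)^2*(y2 0)^2*k1*k2*x^2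 + 9*(y1 3)^2*(y2 0)^2*k2*k3*x^2 + (-9)*(y1 3)^2*(y2 1)*(y2 2)*k1*k3*r*y + (-9)*(y1 3)^2*(y2 1)*(y2 2)*k2*k3*r*y + 9*(y1 3)^2*(y2 1)^2*k1*k3*y^2 + 9*(y1 3)^2*(y2 1)^2*k2*k3*y^2 + 9*(y1 3)^2*(y2 2)^2*k1*k2*x^2 + 9*(y1 3)^2*(y2 2)^2*k1*k3*y^2 + 9*(y1 3)^2*(y2 2)^2*k2*k3*x^2 + 9*(y1 3)^2*(y2 2)^2*k2*k3*y^2) * hr + (18*(y1 0)*(y1 1)*(y2 0)*(y2 1)*k1*k2*k3^2 + (-18)*(y1 0)*(y1 1)*(y2 0)*(y2 1)*k1*k2*x^2 + (-18)*(y1 0)*(y1 1)*(y2 0)*(y2 1)*k1*k2*y^2 + 18*(y1 0)*(y1 1)*(y2 0)*(y2 1)*k1*k2^2*k3 + (-18)*(y1 0)*(y1 1)*(y2 0)*(y2 1)*k1*k3*y^2 + 18*(y1 0)*(y1 1)*(y2 0)*(y2 1)*k1^2*k2*k3 + (-18)*(y1 0)*(y1 1)*(y2 0)*(y2 1)*k2*k3*x^2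 + (-36)*(y1 0)*(y1 1)*(y2 0)*(y2 1)*k2*k3*y^2 + 18*(y1 0)*(y1 1)*(y2 0)*(y2 1)*k2^2*k3^2 + 18*(y1 0)*(y1 1)*(y2 0)*(y2 2)*k1*k2*r*y + 18*(y1 0)*(y1 1)*(y2 0)*(y2 2)*k2*k3*r*y + (-18)*(y1 0)*(y1 1)*(y2 0)*(y2 3)*k1*k2*r*x + (-18)*(y1 0)*(y1 1)*(y2 0)*(y2 3)*k2*k3*r*x + 18*(y1 0)*(y1 1)*(y2 1)*(y2 2)*k1*k2*r*x + 18*(y1 0)*(y1 1)*(y2 1)*(y2 2)*k2*k3*r*x + 18*(y1 0)*(y1 1)*(y2 1)*(y2 3)*k1*k2*r*y + 18*(y1 0)*(y1 1)*(y2 1)*(y2 3)*k2*k3*r*y + (-18)*(y1 0)*(y1 1)*(y2 2)*(y2 3)*k1*k2*k3^2 + 18*(y1 0)*(y1 1)*(y2 2)*(y2 3)*k1*k2*x^2 + (-18)*(y1 0)*(y1 1)*(y2 2)*(y2 3)*k1*k2*y^2 + (-18)*(y1 0)*(y1 1)*(y2 2)*(y2 3)*k1*k2^2*k3 + 18*(y1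 0)*(y1 1)*(y2 2)*(y2 3)*k1*k3*y^2 + (-18)*(y1 0)*(y1 1)*(y2 2)*(y2 3)*k1^2*k2*k3 + 18*(y1 0)*(y1 1)*(y2 2)*(y2 3)*k2*k3*x^2 + (-18)*(y1 0)*(y1 1)*(y2 2)*(y2 3)*k2^2*k3^2 + (-18)*(y1 0)*(y1 1)*(y2 2)^2*k1*k2*x*y + (-18)*(y1 0)*(y1 1)*(y2 2)^2*k2*k3*x*y + 18*(y1 0)*(y1 1)*(y2 3)^2*k1*k2*x*y + 18*(y1 0)*(y1 1)*(y2 3)^2*k2*k3*x*y + 18*(y1 0)*(y1 2)*(y2 0)*(y2 1)*k1*k2*r*y + 18*(y1 0)*(y1 2)*(y2 0)*(y2 1)*k2*k3*r*y + (-18)*(y1 0)*(y1 2)*(y2 0)*(y2 2)*k1*k2*y^2 + (-18)*(y1 0)*(y1 2)*(y2 0)*(y2 2)*k2*k3*y^2 + 18*(y1 0)*(y1 2)*(y2 0)*(y2 3)*k1*k2*x*y + 18*(y1 0)*(y1 2)*(y2 0)*(y2 3)*k2*k3*x*y + 18*(y1 0)*(y1 2)*(y2 1)*(y2 2)*k1*k2*x*y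 + 18*(y1 0)*(y1 2)*(y2 1)*(y2 2)*k2*k3*x*y + 36*(y1 0)*(y1 2)*(y2 1)*(y2 3)*k1*k2*k3^2 + (-36)*(y1 0)*(y1 2)*(y2 1)*(y2 3)*k1*k2*x^2 + (-18)*(y1 0)*(y1 2)*(y2 1)*(y2 3)*k1*k2*y^2 + 36*(y1 0)*(y1 2)*(y2 1)*(y2 3)*k1*k2^2*k3 + (-36)*(y1 0)*(y1 2)*(y2 1)*(y2 3)*k1*k3*y^2 + 36*(y1 0)*(y1 2)*(y2 1)*(y2 3)*k1^2*k2*k3 + (-36)*(y1 0)*(y1 2)*(y2 1)*(y2 3)*k2*k3*x^2 + (-54)*(y1 0)*(y1 2)*(y2 1)*(y2 3)*k2*k3*y^2 + 36*(y1 0)*(y1 2)*(y2 1)*(y2 3)*k2^2*k3^2 + (-18)*(y1 0)*(y1 2)*(y2 1)^2*k1*k2*r*x + (-18)*(y1 0)*(y1 2)*(y2 1)^2*k2*k3*r*x + 18*(y1 0)*(y1 2)*(y2 2)*(y2 3)*k1*k2*r*y + 18*(y1 0)*(y1 2)*(y2 2)*(y2 3)*k2*k3*r*y + (-18)*(y1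 0)*(y1 2)*(y2 3)^2*k1*k2*r*x + (-18)*(y1 0)*(y1 2)*(y2 3)^2*k2*k3*r*x + (-18)*(y1 0)*(y1 3)*(y2 0)*(y2 1)*k1*k2*r*x + (-18)*(y1 0)*(y1 3)*(y2 0)*(y2 1)*k2*k3*r*x + 18*(y1 0)*(y1 3)*(y2 0)*(y2 2)*k1*k2*x*y + 18*(y1 0)*(y1 3)*(y2 0)*(y2 2)*k2*k3*x*y + 18*(y1 0)*(y1 3)*(y2 0)*(y2 3)*k1*k2*k3^2 + (-18)*(y1 0)*(y1 3)*(y2 0)*(y2 3)*k1*k2*x^2 + 18*(y1 0)*(y1 3)*(y2 0)*(y2 3)*k1*k2^2*k3 + (-18)*(y1 0)*(y1 3)*(y2 0)*(y2 3)*k1*k3*y^2 + 18*(y1 0)*(y1 3)*(y2 0)*(y2 3)*k1^2*k2*k3 + (-18)*(y1 0)*(y1 3)*(y2 0)*(y2 3)*k2*k3*x^2 + (-18)*(y1 0)*(y1 3)*(y2 0)*(y2 3)*k2*k3*y^2 + 18*(y1 0)*(y1 3)*(y2 0)*(y2 3)*k2^2*k3^2 + (-18)*(y1 0)*(y1 3)*(y2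 1)*(y2 2)*k1*k2*k3^2 + 18*(y1 0)*(y1 3)*(y2 1)*(y2 2)*k1*k2*x^2 + 36*(y1 0)*(y1 3)*(y2 1)*(y2 2)*k1*k2*y^2 + (-18)*(y1 0)*(y1 3)*(y2 1)*(y2 2)*k1*k2^2*k3 + 18*(y1 0)*(y1 3)*(y2 1)*(y2 2)*k1*k3*y^2 + (-18)*(y1 0)*(y1 3)*(y2 1)*(y2 2)*k1^2*k2*k3 + 18*(y1 0)*(y1 3)*(y2 1)*(y2 2)*k2*k3*x^2 + 54*(y1 0)*(y1 3)*(y2 1)*(y2 2)*k2*k3*y^2 + (-18)*(y1 0)*(y1 3)*(y2 1)*(y2 2)*k2^2*k3^2 + (-18)*(y1 0)*(y1 3)*(y2 1)*(y2 3)*k1*k2*x*y + (-18)*(y1 0)*(y1 3)*(y2 1)*(y2 3)*k2*k3*x*y + (-18)*(y1 0)*(y1 3)*(y2 1)^2*k1*k2*r*y + (-18)*(y1 0)*(y1 3)*(y2 1)^2*k2*k3*r*y + 18*(y1 0)*(y1 3)*(y2 2)*(y2 3)*k1*k2*r*x + 18*(y1 0)*(y1 3)*(y2 2)*(y2 3)*k2*k3*r*x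 + (-18)*(y1 0)*(y1 3)*(y2 2)^2*k1*k2*r*y + (-18)*(y1 0)*(y1 3)*(y2 2)^2*k2*k3*r*y + (-18)*(y1 0)^2*(y2 1)*(y2 2)*k1*k2*r*y + (-18)*(y1 0)^2*(y2 1)*(y2 2)*k2*k3*r*y + 18*(y1 0)^2*(y2 1)*(y2 3)*k1*k2*r*x + 18*(y1 0)^2*(y2 1)*(y2 3)*k2*k3*r*x + (-9)*(y1 0)^2*(y2 1)^2*k1*k2*k3^2 + 9*(y1 0)^2*(y2 1)^2*k1*k2*x^2 + 9*(y1 0)^2*(y2 1)^2*k1*k2*y^2 + (-9)*(y1 0)^2*(y2 1)^2*k1*k2^2*k3 + 9*(y1 0)^2*(y2 1)^2*k1*k3*y^2 + (-9)*(y1 0)^2*(y2 1)^2*k1^2*k2*k3 + 9*(y1 0)^2*(y2 1)^2*k2*k3*x^2 + 18*(y1 0)^2*(y2 1)^2*k2*k3*y^2 + (-9)*(y1 0)^2*(y2 1)^2*k2^2*k3^2 + (-18)*(y1 0)^2*(y2 2)*(y2 3)*k1*k2*x*y + (-18)*(y1 0)^2*(y2 2)*(y2 3)*k2*k3*x*y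 + 9*(y1 0)^2*(y2 2)^2*k1*k2*y^2 + 9*(y1 0)^2*(y2 2)^2*k2*k3*y^2 + (-9)*(y1 0)^2*(y2 3)^2*k1*k2*k3^2 + 9*(y1 0)^2*(y2 3)^2*k1*k2*x^2 + (-9)*(y1 0)^2*(y2 3)^2*k1*k2^2*k3 + 9*(y1 0)^2*(y2 3)^2*k1*k3*y^2 + (-9)*(y1 0)^2*(y2 3)^2*k1^2*k2*k3 + 9*(y1 0)^2*(y2 3)^2*k2*k3*x^2 + 9*(y1 0)^2*(y2 3)^2*k2*k3*y^2 + (-9)*(y1 0)^2*(y2 3)^2*k2^2*k3^2 + 18*(y1 1)*(y1 2)*(y2 0)*(y2 1)*k1*k2*r*x + 18*(y1 1)*(y1 2)*(y2 0)*(y2 1)*k2*k3*r*x + 18*(y1 1)*(y1 2)*(y2 0)*(y2 2)*k1*k2*x*y + 18*(y1 1)*(y1 2)*(y2 0)*(y2 2)*k2*k3*x*y + (-18)*(y1 1)*(y1 2)*(y2 0)*(y2 3)*k1*k2*k3^2 + 18*(y1 1)*(y1 2)*(y2 0)*(y2 3)*k1*k2*x^2 + 36*(y1 1)*(y1 2)*(y2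 0)*(y2 3)*k1*k2*y^2 + (-18)*(y1 1)*(y1 2)*(y2 0)*(y2 3)*k1*k2^2*k3 + 18*(y1 1)*(y1 2)*(y2 0)*(y2 3)*k1*k3*y^2 + (-18)*(y1 1)*(y1 2)*(y2 0)*(y2 3)*k1^2*k2*k3 + 18*(y1 1)*(y1 2)*(y2 0)*(y2 3)*k2*k3*x^2 + 54*(y1 1)*(y1 2)*(y2 0)*(y2 3)*k2*k3*y^2 + (-18)*(y1 1)*(y1 2)*(y2 0)*(y2 3)*k2^2*k3^2 + (-18)*(y1 1)*(y1 2)*(y2 0)^2*k1*k2*r*y + (-18)*(y1 1)*(y1 2)*(y2 0)^2*k2*k3*r*y + 18*(y1 1)*(y1 2)*(y2 1)*(y2 2)*k1*k2*k3^2 + (-18)*(y1 1)*(y1 2)*(y2 1)*(y2 2)*k1*k2*x^2 + 18*(y1 1)*(y1 2)*(y2 1)*(y2 2)*k1*k2^2*k3 + (-18)*(y1 1)*(y1 2)*(y2 1)*(y2 2)*k1*k3*y^2 + 18*(y1 1)*(y1 2)*(y2 1)*(y2 2)*k1^2*k2*k3 + (-18)*(y1 1)*(y1 2)*(y2 1)*(y2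 2)*k2*k3*x^2 + (-18)*(y1 1)*(y1 2)*(y2 1)*(y2 2)*k2*k3*y^2 + 18*(y1 1)*(y1 2)*(y2 1)*(y2 2)*k2^2*k3^2 + (-18)*(y1 1)*(y1 2)*(y2 1)*(y2 3)*k1*k2*x*y + (-18)*(y1 1)*(y1 2)*(y2 1)*(y2 3)*k2*k3*x*y + (-18)*(y1 1)*(y1 2)*(y2 2)*(y2 3)*k1*k2*r*x + (-18)*(y1 1)*(y1 2)*(y2 2)*(y2 3)*k2*k3*r*x + (-18)*(y1 1)*(y1 2)*(y2 3)^2*k1*k2*r*y + (-18)*(y1 1)*(y1 2)*(y2 3)^2*k2*k3*r*y + 18*(y1 1)*(y1 3)*(y2 0)*(y2 1)*k1*k2*r*y + 18*(y1 1)*(y1 3)*(y2 0)*(y2 1)*k2*k3*r*y + 36*(y1 1)*(y1 3)*(y2 0)*(y2 2)*k1*k2*k3^2 + (-36)*(y1 1)*(y1 3)*(y2 0)*(y2 2)*k1*k2*x^2 + (-18)*(y1 1)*(y1 3)*(y2 0)*(y2 2)*k1*k2*y^2 + 36*(y1 1)*(y1 3)*(y2 0)*(y2 2)*k1*k2^2*k3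 + (-36)*(y1 1)*(y1 3)*(y2 0)*(y2 2)*k1*k3*y^2 + 36*(y1 1)*(y1 3)*(y2 0)*(y2 2)*k1^2*k2*k3 + (-36)*(y1 1)*(y1 3)*(y2 0)*(y2 2)*k2*k3*x^2 + (-54)*(y1 1)*(y1 3)*(y2 0)*(y2 2)*k2*k3*y^2 + 36*(y1 1)*(y1 3)*(y2 0)*(y2 2)*k2^2*k3^2 + (-18)*(y1 1)*(y1 3)*(y2 0)*(y2 3)*k1*k2*x*y + (-18)*(y1 1)*(y1 3)*(y2 0)*(y2 3)*k2*k3*x*y + 18*(y1 1)*(y1 3)*(y2 0)^2*k1*k2*r*x + 18*(y1 1)*(y1 3)*(y2 0)^2*k2*k3*r*x + (-18)*(y1 1)*(y1 3)*(y2 1)*(y2 2)*k1*k2*x*y + (-18)*(y1 1)*(y1 3)*(y2 1)*(y2 2)*k2*k3*x*y + (-18)*(y1 1)*(y1 3)*(y2 1)*(y2 3)*k1*k2*y^2 + (-18)*(y1 1)*(y1 3)*(y2 1)*(y2 3)*k2*k3*y^2 + 18*(y1 1)*(y1 3)*(y2 2)*(y2 3)*k1*k2*r*y + 18*(y1 1)*(y1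 3)*(y2 2)*(y2 3)*k2*k3*r*y + 18*(y1 1)*(y1 3)*(y2 2)^2*k1*k2*r*x + 18*(y1 1)*(y1 3)*(y2 2)^2*k2*k3*r*x + (-18)*(y1 1)^2*(y2 0)*(y2 2)*k1*k2*r*x + (-18)*(y1 1)^2*(y2 0)*(y2 2)*k2*k3*r*x + (-18)*(y1 1)^2*(y2 0)*(y2 3)*k1*k2*r*y + (-18)*(y1 1)^2*(y2 0)*(y2 3)*k2*k3*r*y + (-9)*(y1 1)^2*(y2 0)^2*k1*k2*k3^2 + 9*(y1 1)^2*(y2 0)^2*k1*k2*x^2 + 9*(y1 1)^2*(y2 0)^2*k1*k2*y^2 + (-9)*(y1 1)^2*(y2 0)^2*k1*k2^2*k3 + 9*(y1 1)^2*(y2 0)^2*k1*k3*y^2 + (-9)*(y1 1)^2*(y2 0)^2*k1^2*k2*k3 + 9*(y1 1)^2*(y2 0)^2*k2*k3*x^2 + 18*(y1 1)^2*(y2 0)^2*k2*k3*y^2 + (-9)*(y1 1)^2*(y2 0)^2*k2^2*k3^2 + 18*(y1 1)^2*(y2 2)*(y2 3)*k1*k2*x*y + 18*(y1 1)^2*(y2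 2)*(y2 3)*k2*k3*x*y + (-9)*(y1 1)^2*(y2 2)^2*k1*k2*k3^2 + 9*(y1 1)^2*(y2 2)^2*k1*k2*x^2 + (-9)*(y1 1)^2*(y2 2)^2*k1*k2^2*k3 + 9*(y1 1)^2*(y2 2)^2*k1*k3*y^2 + (-9)*(y1 1)^2*(y2 2)^2*k1^2*k2*k3 + 9*(y1 1)^2*(y2 2)^2*k2*k3*x^2 + 9*(y1 1)^2*(y2 2)^2*k2*k3*y^2 + (-9)*(y1 1)^2*(y2 2)^2*k2^2*k3^2 + 9*(y1 1)^2*(y2 3)^2*k1*k2*y^2 + 9*(y1 1)^2*(y2 3)^2*k2*k3*y^2 + (-18)*(y1 2)*(y1 3)*(y2 0)*(y2 1)*k1*k2*k3^2 + 18*(y1 2)*(y1 3)*(y2 0)*(y2 1)*k1*k2*x^2 + (-18)*(y1 2)*(y1 3)*(y2 0)*(y2 1)*k1*k2*y^2 + (-18)*(y1 2)*(y1 3)*(y2 0)*(y2 1)*k1*k2^2*k3 + 18*(y1 2)*(y1 3)*(y2 0)*(y2 1)*k1*k3*y^2 + (-18)*(y1 2)*(y1 3)*(y2 0)*(y2 1)*k1^2*k2*k3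 + 18*(y1 2)*(y1 3)*(y2 0)*(y2 1)*k2*k3*x^2 + (-18)*(y1 2)*(y1 3)*(y2 0)*(y2 1)*k2^2*k3^2 + 18*(y1 2)*(y1 3)*(y2 0)*(y2 2)*k1*k2*r*y + 18*(y1 2)*(y1 3)*(y2 0)*(y2 2)*k2*k3*r*y + 18*(y1 2)*(y1 3)*(y2 0)*(y2 3)*k1*k2*r*x + 18*(y1 2)*(y1 3)*(y2 0)*(y2 3)*k2*k3*r*x + (-18)*(y1 2)*(y1 3)*(y2 0)^2*k1*k2*x*y + (-18)*(y1 2)*(y1 3)*(y2 0)^2*k2*k3*x*y + (-18)*(y1 2)*(y1 3)*(y2 1)*(y2 2)*k1*k2*r*x + (-18)*(y1 2)*(y1 3)*(y2 1)*(y2 2)*k2*k3*r*x + 18*(y1 2)*(y1 3)*(y2 1)*(y2 3)*k1*k2*r*y + 18*(y1 2)*(y1 3)*(y2 1)*(y2 3)*k2*k3*r*y + 18*(y1 2)*(y1 3)*(y2 1)^2*k1*k2*x*y + 18*(y1 2)*(y1 3)*(y2 1)^2*k2*k3*x*y + 18*(y1 2)*(y1 3)*(y2 2)*(y2 3)*k1*k2*k3^2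 + (-18)*(y1 2)*(y1 3)*(y2 2)*(y2 3)*k1*k2*x^2 + (-18)*(y1 2)*(y1 3)*(y2 2)*(y2 3)*k1*k2*y^2 + 18*(y1 2)*(y1 3)*(y2 2)*(y2 3)*k1*k2^2*k3 + (-18)*(y1 2)*(y1 3)*(y2 2)*(y2 3)*k1*k3*y^2 + 18*(y1 2)*(y1 3)*(y2 2)*(y2 3)*k1^2*k2*k3 + (-18)*(y1 2)*(y1 3)*(y2 2)*(y2 3)*k2*k3*x^2 + (-36)*(y1 2)*(y1 3)*(y2 2)*(y2 3)*k2*k3*y^2 + 18*(y1 2)*(y1 3)*(y2 2)*(y2 3)*k2^2*k3^2 + (-18)*(y1 2)^2*(y2 0)*(y2 1)*k1*k2*x*y + (-18)*(y1 2)^2*(y2 0)*(y2 1)*k2*k3*x*y + (-18)*(y1 2)^2*(y2 0)*(y2 3)*k1*k2*r*y + (-18)*(y1 2)^2*(y2 0)*(y2 3)*k2*k3*r*y + 9*(y1 2)^2*(y2 0)^2*k1*k2*y^2 + 9*(y1 2)^2*(y2 0)^2*k2*k3*y^2 + 18*(y1 2)^2*(y2 1)*(y2 3)*k1*k2*r*x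 + 18*(y1 2)^2*(y2 1)*(y2 3)*k2*k3*r*x + (-9)*(y1 2)^2*(y2 1)^2*k1*k2*k3^2 + 9*(y1 2)^2*(y2 1)^2*k1*k2*x^2 + (-9)*(y1 2)^2*(y2 1)^2*k1*k2^2*k3 + 9*(y1 2)^2*(y2 1)^2*k1*k3*y^2 + (-9)*(y1 2)^2*(y2 1)^2*k1^2*k2*k3 + 9*(y1 2)^2*(y2 1)^2*k2*k3*x^2 + 9*(y1 2)^2*(y2 1)^2*k2*k3*y^2 + (-9)*(y1 2)^2*(y2 1)^2*k2^2*k3^2 + (-9)*(y1 2)^2*(y2 3)^2*k1*k2*k3^2 + 9*(y1 2)^2*(y2 3)^2*k1*k2*x^2 + 9*(y1 2)^2*(y2 3)^2*k1*k2*y^2 + (-9)*(y1 2)^2*(y2 3)^2*k1*k2^2*k3 + 9*(y1 2)^2*(y2 3)^2*k1*k3*y^2 + (-9)*(y1 2)^2*(y2 3)^2*k1^2*k2*k3 + 9*(y1 2)^2*(y2 3)^2*k2*k3*x^2 + 18*(y1 2)^2*(y2 3)^2*k2*k3*y^2 + (-9)*(y1 2)^2*(y2 3)^2*k2^2*k3^2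 + 18*(y1 3)^2*(y2 0)*(y2 1)*k1*k2*x*y + 18*(y1 3)^2*(y2 0)*(y2 1)*k2*k3*x*y + (-18)*(y1 3)^2*(y2 0)*(y2 2)*k1*k2*r*x + (-18)*(y1 3)^2*(y2 0)*(y2 2)*k2*k3*r*x + (-9)*(y1 3)^2*(y2 0)^2*k1*k2*k3^2 + 9*(y1 3)^2*(y2 0)^2*k1*k2*x^2 + (-9)*(y1 3)^2*(y2 0)^2*k1*k2^2*k3 + 9*(y1 3)^2*(y2 0)^2*k1*k3*y^2 + (-9)*(y1 3)^2*(y2 0)^2*k1^2*k2*k3 + 9*(y1 3)^2*(y2 0)^2*k2*k3*x^2 + 9*(y1 3)^2*(y2 0)^2*k2*k3*y^2 + (-9)*(y1 3)^2*(y2 0)^2*k2^2*k3^2 + (-18)*(y1 3)^2*(y2 1)*(y2 2)*k1*k2*r*y + (-18)*(y1 3)^2*(y2 1)*(y2 2)*k2*k3*r*y + 9*(y1 3)^2*(y2 1)^2*k1*k2*y^2 + 9*(y1 3)^2*(y2 1)^2*k2*k3*y^2 + (-9)*(y1 3)^2*(y2 2)^2*k1*k2*k3^2 + 9*(y1 3)^2*(y2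 2)^2*k1*k2*x^2 + 9*(y1 3)^2*(y2 2)^2*k1*k2*y^2 + (-9)*(y1 3)^2*(y2 2)^2*k1*k2^2*k3 + 9*(y1 3)^2*(y2 2)^2*k1*k3*y^2 + (-9)*(y1 3)^2*(y2 2)^2*k1^2*k2*k3 + 9*(y1 3)^2*(y2 2)^2*k2*k3*x^2 + 18*(y1 3)^2*(y2 2)^2*k2*k3*y^2 + (-9)*(y1 3)^2*(y2 2)^2*k2^2*k3^2) * hx + (36*(y1 0)*(y1 1)*(y2 0)*(y2 1)*k1*k2*k3^2 + (-18)*(y1 0)*(y1 1)*(y2 0)*(y2 1)*k1*k3*y^2 + 18*(y1 0)*(y1 1)*(y2 0)*(y2 1)*k1^2*k3^2 + (-18)*(y1 0)*(y1 1)*(y2 0)*(y2 1)*k2*k3*y^2 + 18*(y1 0)*(y1 1)*(y2 0)*(y2 1)*k2^2*k3^2 + 18*(y1 0)*(y1 1)*(y2 0)*(y2 2)*k1*k3*r*y + 18*(y1 0)*(y1 1)*(y2 0)*(y2 2)*k2*k3*r*y + (-18)*(y1 0)*(y1 1)*(y2 0)*(y2 3)*k1*k3*r*x + (-18)*(y1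 0)*(y1 1)*(y2 0)*(y2 3)*k2*k3*r*x + 18*(y1 0)*(y1 1)*(y2 1)*(y2 2)*k1*k3*r*x + 18*(y1 0)*(y1 1)*(y2 1)*(y2 2)*k2*k3*r*x + 18*(y1 0)*(y1 1)*(y2 1)*(y2 3)*k1*k3*r*y + 18*(y1 0)*(y1 1)*(y2 1)*(y2 3)*k2*k3*r*y + (-36)*(y1 0)*(y1 1)*(y2 2)*(y2 3)*k1*k2*k3^2 + (-18)*(y1 0)*(y1 1)*(y2 2)*(y2 3)*k1*k3*y^2 + (-18)*(y1 0)*(y1 1)*(y2 2)*(y2 3)*k1^2*k3^2 + (-18)*(y1 0)*(y1 1)*(y2 2)*(y2 3)*k2*k3*y^2 + (-18)*(y1 0)*(y1 1)*(y2 2)*(y2 3)*k2^2*k3^2 + (-18)*(y1 0)*(y1 1)*(y2 2)^2*k1*k3*x*y + (-18)*(y1 0)*(y1 1)*(y2 2)^2*k2*k3*x*y + 18*(y1 0)*(y1 1)*(y2 3)^2*k1*k3*x*y + 18*(y1 0)*(y1 1)*(y2 3)^2*k2*k3*x*y + 18*(y1 0)*(y1 2)*(y2 0)*(y2 1)*k1*k3*r*y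 + 18*(y1 0)*(y1 2)*(y2 0)*(y2 1)*k2*k3*r*y + (-18)*(y1 0)*(y1 2)*(y2 0)*(y2 2)*k1*k3*y^2 + (-18)*(y1 0)*(y1 2)*(y2 0)*(y2 2)*k2*k3*y^2 + 18*(y1 0)*(y1 2)*(y2 0)*(y2 3)*k1*k3*x*y + 18*(y1 0)*(y1 2)*(y2 0)*(y2 3)*k2*k3*x*y + 18*(y1 0)*(y1 2)*(y2 1)*(y2 2)*k1*k3*x*y + 18*(y1 0)*(y1 2)*(y2 1)*(y2 2)*k2*k3*x*y + 72*(y1 0)*(y1 2)*(y2 1)*(y2 3)*k1*k2*k3^2 + (-18)*(y1 0)*(y1 2)*(y2 1)*(y2 3)*k1*k3*y^2 + 36*(y1 0)*(y1 2)*(y2 1)*(y2 3)*k1^2*k3^2 + (-18)*(y1 0)*(y1 2)*(y2 1)*(y2 3)*k2*k3*y^2 + 36*(y1 0)*(y1 2)*(y2 1)*(y2 3)*k2^2*k3^2 + (-18)*(y1 0)*(y1 2)*(y2 1)^2*k1*k3*r*x + (-18)*(y1 0)*(y1 2)*(y2 1)^2*k2*k3*r*x + 18*(y1 0)*(y1 2)*(y2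 2)*(y2 3)*k1*k3*r*y + 18*(y1 0)*(y1 2)*(y2 2)*(y2 3)*k2*k3*r*y + (-18)*(y1 0)*(y1 2)*(y2 3)^2*k1*k3*r*x + (-18)*(y1 0)*(y1 2)*(y2 3)^2*k2*k3*r*x + (-18)*(y1 0)*(y1 3)*(y2 0)*(y2 1)*k1*k3*r*x + (-18)*(y1 0)*(y1 3)*(y2 0)*(y2 1)*k2*k3*r*x + 18*(y1 0)*(y1 3)*(y2 0)*(y2 2)*k1*k3*x*y + 18*(y1 0)*(y1 3)*(y2 0)*(y2 2)*k2*k3*x*y + 36*(y1 0)*(y1 3)*(y2 0)*(y2 3)*k1*k2*k3^2 + 18*(y1 0)*(y1 3)*(y2 0)*(y2 3)*k1^2*k3^2 + 18*(y1 0)*(y1 3)*(y2 0)*(y2 3)*k2^2*k3^2 + (-36)*(y1 0)*(y1 3)*(y2 1)*(y2 2)*k1*k2*k3^2 + 36*(y1 0)*(y1 3)*(y2 1)*(y2 2)*k1*k3*y^2 + (-18)*(y1 0)*(y1 3)*(y2 1)*(y2 2)*k1^2*k3^2 + 36*(y1 0)*(y1 3)*(y2 1)*(y2 2)*k2*k3*y^2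 + (-18)*(y1 0)*(y1 3)*(y2 1)*(y2 2)*k2^2*k3^2 + (-18)*(y1 0)*(y1 3)*(y2 1)*(y2 3)*k1*k3*x*y + (-18)*(y1 0)*(y1 3)*(y2 1)*(y2 3)*k2*k3*x*y + (-18)*(y1 0)*(y1 3)*(y2 1)^2*k1*k3*r*y + (-18)*(y1 0)*(y1 3)*(y2 1)^2*k2*k3*r*y + 18*(y1 0)*(y1 3)*(y2 2)*(y2 3)*k1*k3*r*x + 18*(y1 0)*(y1 3)*(y2 2)*(y2 3)*k2*k3*r*x + (-18)*(y1 0)*(y1 3)*(y2 2)^2*k1*k3*r*y + (-18)*(y1 0)*(y1 3)*(y2 2)^2*k2*k3*r*y + (-18)*(y1 0)^2*(y2 1)*(y2 2)*k1*k3*r*y + (-18)*(y1 0)^2*(y2 1)*(y2 2)*k2*k3*r*y + 18*(y1 0)^2*(y2 1)*(y2 3)*k1*k3*r*x + 18*(y1 0)^2*(y2 1)*(y2 3)*k2*k3*r*x + (-18)*(y1 0)^2*(y2 1)^2*k1*k2*k3^2 + 9*(y1 0)^2*(y2 1)^2*k1*k3*y^2 + (-9)*(y1 0)^2*(y2 1)^2*k1^2*k3^2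 + 9*(y1 0)^2*(y2 1)^2*k2*k3*y^2 + (-9)*(y1 0)^2*(y2 1)^2*k2^2*k3^2 + (-18)*(y1 0)^2*(y2 2)*(y2 3)*k1*k3*x*y + (-18)*(y1 0)^2*(y2 2)*(y2 3)*k2*k3*x*y + 9*(y1 0)^2*(y2 2)^2*k1*k3*y^2 + 9*(y1 0)^2*(y2 2)^2*k2*k3*y^2 + (-18)*(y1 0)^2*(y2 3)^2*k1*k2*k3^2 + (-9)*(y1 0)^2*(y2 3)^2*k1^2*k3^2 + (-9)*(y1 0)^2*(y2 3)^2*k2^2*k3^2 + 18*(y1 1)*(y1 2)*(y2 0)*(y2 1)*k1*k3*r*x + 18*(y1 1)*(y1 2)*(y2 0)*(y2 1)*k2*k3*r*x + 18*(y1 1)*(y1 2)*(y2 0)*(y2 2)*k1*k3*x*y + 18*(y1 1)*(y1 2)*(y2 0)*(y2 2)*k2*k3*x*y + (-36)*(y1 1)*(y1 2)*(y2 0)*(y2 3)*k1*k2*k3^2 + 36*(y1 1)*(y1 2)*(y2 0)*(y2 3)*k1*k3*y^2 + (-18)*(y1 1)*(y1 2)*(y2 0)*(y2 3)*k1^2*k3^2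 + 36*(y1 1)*(y1 2)*(y2 0)*(y2 3)*k2*k3*y^2 + (-18)*(y1 1)*(y1 2)*(y2 0)*(y2 3)*k2^2*k3^2 + (-18)*(y1 1)*(y1 2)*(y2 0)^2*k1*k3*r*y + (-18)*(y1 1)*(y1 2)*(y2 0)^2*k2*k3*r*y + 36*(y1 1)*(y1 2)*(y2 1)*(y2 2)*k1*k2*k3^2 + 18*(y1 1)*(y1 2)*(y2 1)*(y2 2)*k1^2*k3^2 + 18*(y1 1)*(y1 2)*(y2 1)*(y2 2)*k2^2*k3^2 + (-18)*(y1 1)*(y1 2)*(y2 1)*(y2 3)*k1*k3*x*y + (-18)*(y1 1)*(y1 2)*(y2 1)*(y2 3)*k2*k3*x*y + (-18)*(y1 1)*(y1 2)*(y2 2)*(y2 3)*k1*k3*r*x + (-18)*(y1 1)*(y1 2)*(y2 2)*(y2 3)*k2*k3*r*x + (-18)*(y1 1)*(y1 2)*(y2 3)^2*k1*k3*r*y + (-18)*(y1 1)*(y1 2)*(y2 3)^2*k2*k3*r*y + 18*(y1 1)*(y1 3)*(y2 0)*(y2 1)*k1*k3*r*y + 18*(y1 1)*(y1 3)*(y2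 0)*(y2 1)*k2*k3*r*y + 72*(y1 1)*(y1 3)*(y2 0)*(y2 2)*k1*k2*k3^2 + (-18)*(y1 1)*(y1 3)*(y2 0)*(y2 2)*k1*k3*y^2 + 36*(y1 1)*(y1 3)*(y2 0)*(y2 2)*k1^2*k3^2 + (-18)*(y1 1)*(y1 3)*(y2 0)*(y2 2)*k2*k3*y^2 + 36*(y1 1)*(y1 3)*(y2 0)*(y2 2)*k2^2*k3^2 + (-18)*(y1 1)*(y1 3)*(y2 0)*(y2 3)*k1*k3*x*y + (-18)*(y1 1)*(y1 3)*(y2 0)*(y2 3)*k2*k3*x*y + 18*(y1 1)*(y1 3)*(y2 0)^2*k1*k3*r*x + 18*(y1 1)*(y1 3)*(y2 0)^2*k2*k3*r*x + (-18)*(y1 1)*(y1 3)*(y2 1)*(y2 2)*k1*k3*x*y + (-18)*(y1 1)*(y1 3)*(y2 1)*(y2 2)*k2*k3*x*y + (-18)*(y1 1)*(y1 3)*(y2 1)*(y2 3)*k1*k3*y^2 + (-18)*(y1 1)*(y1 3)*(y2 1)*(y2 3)*k2*k3*y^2 + 18*(y1 1)*(y1 3)*(y2 2)*(y2 3)*k1*k3*r*y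 + 18*(y1 1)*(y1 3)*(y2 2)*(y2 3)*k2*k3*r*y + 18*(y1 1)*(y1 3)*(y2 2)^2*k1*k3*r*x + 18*(y1 1)*(y1 3)*(y2 2)^2*k2*k3*r*x + (-18)*(y1 1)^2*(y2 0)*(y2 2)*k1*k3*r*x + (-18)*(y1 1)^2*(y2 0)*(y2 2)*k2*k3*r*x + (-18)*(y1 1)^2*(y2 0)*(y2 3)*k1*k3*r*y + (-18)*(y1 1)^2*(y2 0)*(y2 3)*k2*k3*r*y + (-18)*(y1 1)^2*(y2 0)^2*k1*k2*k3^2 + 9*(y1 1)^2*(y2 0)^2*k1*k3*y^2 + (-9)*(y1 1)^2*(y2 0)^2*k1^2*k3^2 + 9*(y1 1)^2*(y2 0)^2*k2*k3*y^2 + (-9)*(y1 1)^2*(y2 0)^2*k2^2*k3^2 + 18*(y1 1)^2*(y2 2)*(y2 3)*k1*k3*x*y + 18*(y1 1)^2*(y2 2)*(y2 3)*k2*k3*x*y + (-18)*(y1 1)^2*(y2 2)^2*k1*k2*k3^2 + (-9)*(y1 1)^2*(y2 2)^2*k1^2*k3^2 + (-9)*(y1 1)^2*(y2 2)^2*k2^2*k3^2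 + 9*(y1 1)^2*(y2 3)^2*k1*k3*y^2 + 9*(y1 1)^2*(y2 3)^2*k2*k3*y^2 + (-36)*(y1 2)*(y1 3)*(y2 0)*(y2 1)*k1*k2*k3^2 + (-18)*(y1 2)*(y1 3)*(y2 0)*(y2 1)*k1*k3*y^2 + (-18)*(y1 2)*(y1 3)*(y2 0)*(y2 1)*k1^2*k3^2 + (-18)*(y1 2)*(y1 3)*(y2 0)*(y2 1)*k2*k3*y^2 + (-18)*(y1 2)*(y1 3)*(y2 0)*(y2 1)*k2^2*k3^2 + 18*(y1 2)*(y1 3)*(y2 0)*(y2 2)*k1*k3*r*y + 18*(y1 2)*(y1 3)*(y2 0)*(y2 2)*k2*k3*r*y + 18*(y1 2)*(y1 3)*(y2 0)*(y2 3)*k1*k3*r*x + 18*(y1 2)*(y1 3)*(y2 0)*(y2 3)*k2*k3*r*x + (-18)*(y1 2)*(y1 3)*(y2 0)^2*k1*k3*x*y + (-18)*(y1 2)*(y1 3)*(y2 0)^2*k2*k3*x*y + (-18)*(y1 2)*(y1 3)*(y2 1)*(y2 2)*k1*k3*r*x + (-18)*(y1 2)*(y1 3)*(y2 1)*(y2 2)*k2*k3*r*x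 + 18*(y1 2)*(y1 3)*(y2 1)*(y2 3)*k1*k3*r*y + 18*(y1 2)*(y1 3)*(y2 1)*(y2 3)*k2*k3*r*y + 18*(y1 2)*(y1 3)*(y2 1)^2*k1*k3*x*y + 18*(y1 2)*(y1 3)*(y2 1)^2*k2*k3*x*y + 36*(y1 2)*(y1 3)*(y2 2)*(y2 3)*k1*k2*k3^2 + (-18)*(y1 2)*(y1 3)*(y2 2)*(y2 3)*k1*k3*y^2 + 18*(y1 2)*(y1 3)*(y2 2)*(y2 3)*k1^2*k3^2 + (-18)*(y1 2)*(y1 3)*(y2 2)*(y2 3)*k2*k3*y^2 + 18*(y1 2)*(y1 3)*(y2 2)*(y2 3)*k2^2*k3^2 + (-18)*(y1 2)^2*(y2 0)*(y2 1)*k1*k3*x*y + (-18)*(y1 2)^2*(y2 0)*(y2 1)*k2*k3*x*y + (-18)*(y1 2)^2*(y2 0)*(y2 3)*k1*k3*r*y + (-18)*(y1 2)^2*(y2 0)*(y2 3)*k2*k3*r*y + 9*(y1 2)^2*(y2 0)^2*k1*k3*y^2 + 9*(y1 2)^2*(y2 0)^2*k2*k3*y^2 + 18*(y1 2)^2*(y2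 1)*(y2 3)*k1*k3*r*x + 18*(y1 2)^2*(y2 1)*(y2 3)*k2*k3*r*x + (-18)*(y1 2)^2*(y2 1)^2*k1*k2*k3^2 + (-9)*(y1 2)^2*(y2 1)^2*k1^2*k3^2 + (-9)*(y1 2)^2*(y2 1)^2*k2^2*k3^2 + (-18)*(y1 2)^2*(y2 3)^2*k1*k2*k3^2 + 9*(y1 2)^2*(y2 3)^2*k1*k3*y^2 + (-9)*(y1 2)^2*(y2 3)^2*k1^2*k3^2 + 9*(y1 2)^2*(y2 3)^2*k2*k3*y^2 + (-9)*(y1 2)^2*(y2 3)^2*k2^2*k3^2 + 18*(y1 3)^2*(y2 0)*(y2 1)*k1*k3*x*y + 18*(y1 3)^2*(y2 0)*(y2 1)*k2*k3*x*y + (-18)*(y1 3)^2*(y2 0)*(y2 2)*k1*k3*r*x + (-18)*(y1 3)^2*(y2 0)*(y2 2)*k2*k3*r*x + (-18)*(y1 3)^2*(y2 0)^2*k1*k2*k3^2 + (-9)*(y1 3)^2*(y2 0)^2*k1^2*k3^2 + (-9)*(y1 3)^2*(y2 0)^2*k2^2*k3^2 + (-18)*(y1 3)^2*(y2 1)*(y2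 2)*k1*k3*r*y + (-18)*(y1 3)^2*(y2 1)*(y2 2)*k2*k3*r*y + 9*(y1 3)^2*(y2 1)^2*k1*k3*y^2 + 9*(y1 3)^2*(y2 1)^2*k2*k3*y^2 + (-18)*(y1 3)^2*(y2 2)^2*k1*k2*k3^2 + 9*(y1 3)^2*(y2 2)^2*k1*k3*y^2 + (-9)*(y1 3)^2*(y2 2)^2*k1^2*k3^2 + 9*(y1 3)^2*(y2 2)^2*k2*k3*y^2 + (-9)*(y1 3)^2*(y2 2)^2*k2^2*k3^2) * hy

set_option maxRecDepth 8000 in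
set_option maxHeartbeats 6400000 in
lemma caseD (k1 k2 k3 x y r : ℝ) (hx : x^2 = k3*(k1+k2)) (hy : y^2 = -(k2*(k1+k3)))
    (hr : r^2 = x^2 + y^2) (y1 y2 : V4) :
    (cmt (JM k1 k2 k3 ![r,0,x,y]) y1 y2).det = 0 := by
  simp [cmt, JM, Matrix.mulVec, dotProduct, Fin.sum_univ_four,
    Matrix.det_succ_row_zero, Fin.sum_univ_succ, Fin.succAbove,
    show (Fin.succ 2 : Fin 4) = 3 from rfl, show (Fin.castSucc 2 : Fin 4) = 2 from rfl,
    show (Fin.succ 0 : Fin 4) = 1 from rfl, show (Fin.succ 1 : Fin 4) = 2 from rfl,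
    show (Fin.castSucc 0 : Fin 4) = 0 from rfl, show (Fin.castSucc 1 : Fin 4) = 1 from rfl]
  linear_combination ((-18)*(y1 0)*(y1 1)*(y2 0)*(y2 1)*k1*k2*x^2 + (-18)*(y1 0)*(y1 1)*(y2 0)*(y2 1)*k1*k3*y^2 + (-18)*(y1 0)*(y1 1)*(y2 0)*(y2 1)*k2*k3*x^2 + (-18)*(y1 0)*(y1 1)*(y2 0)*(y2 1)*k2*k3*y^2 + 9*(y1 0)*(y1 1)*(y2 0)*(y2 2)*k1*k3*r*y + 9*(y1 0)*(y1 1)*(y2 0)*(y2 2)*k2*k3*r*y + (-9)*(y1 0)*(y1 1)*(y2 0)*(y2 3)*k1*k2*r*x + (-9)*(y1 0)*(y1 1)*(y2 0)*(y2 3)*k2*k3*r*x + 9*(y1 0)*(y1 1)*(y2 1)*(y2 2)*k1*k2*r*x + 9*(y1 0)*(y1 1)*(y2 1)*(y2 2)*k2*k3*r*x + 9*(y1 0)*(y1 1)*(y2 1)*(y2 3)*k1*k3*r*y + 9*(y1 0)*(y1 1)*(y2 1)*(y2 3)*k2*k3*r*y + 9*(y1 0)*(y1 1)*(y2 2)*(y2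 3)*k1*k2*r^2 + 9*(y1 0)*(y1 1)*(y2 2)*(y2 3)*k1*k2*x^2 + (-9)*(y1 0)*(y1 1)*(y2 2)*(y2 3)*k1*k2*y^2 + (-9)*(y1 0)*(y1 1)*(y2 2)*(y2 3)*k1*k3*r^2 + 9*(y1 0)*(y1 1)*(y2 2)*(y2 3)*k1*k3*x^2 + (-9)*(y1 0)*(y1 1)*(y2 2)*(y2 3)*k1*k3*y^2 + 18*(y1 0)*(y1 1)*(y2 2)*(y2 3)*k2*k3*x^2 + (-18)*(y1 0)*(y1 1)*(y2 2)*(y2 3)*k2*k3*y^2 + (-9)*(y1 0)*(y1 1)*(y2 2)^2*k1*k2*x*y + (-9)*(y1 0)*(y1 1)*(y2 2)^2*k1*k3*x*y + (-18)*(y1 0)*(y1 1)*(y2 2)^2*k2*k3*x*y + 9*(y1 0)*(y1 1)*(y2 3)^2*k1*k2*x*y + 9*(y1 0)*(y1 1)*(y2 3)^2*k1*k3*x*y + 18*(y1 0)*(y1 1)*(y2 3)^2*k2*k3*x*y + 9*(y1 0)*(y1 2)*(y2 0)*(y2 1)*k1*k3*r*y + 9*(y1 0)*(y1 2)*(y2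 0)*(y2 1)*k2*k3*r*y + (-18)*(y1 0)*(y1 2)*(y2 0)*(y2 2)*k1*k3*y^2 + (-18)*(y1 0)*(y1 2)*(y2 0)*(y2 2)*k2*k3*y^2 + 9*(y1 0)*(y1 2)*(y2 0)*(y2 3)*k1*k2*x*y + 9*(y1 0)*(y1 2)*(y2 0)*(y2 3)*k1*k3*x*y + 18*(y1 0)*(y1 2)*(y2 0)*(y2 3)*k2*k3*x*y + 9*(y1 0)*(y1 2)*(y2 1)*(y2 2)*k1*k2*x*y + 9*(y1 0)*(y1 2)*(y2 1)*(y2 2)*k1*k3*x*y + 18*(y1 0)*(y1 2)*(y2 1)*(y2 2)*k2*k3*x*y + (-9)*(y1 0)*(y1 2)*(y2 1)*(y2 3)*k1*k2*r^2 + (-27)*(y1 0)*(y1 2)*(y2 1)*(y2 3)*k1*k2*x^2 + 9*(y1 0)*(y1 2)*(y2 1)*(y2 3)*k1*k2*y^2 + (-18)*(y1 0)*(y1 2)*(y2 1)*(y2 3)*k1*k3*y^2 + (-9)*(y1 0)*(y1 2)*(y2 1)*(y2 3)*k2*k3*r^2 + (-27)*(y1 0)*(y1 2)*(y2 1)*(y2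 3)*k2*k3*x^2 + (-9)*(y1 0)*(y1 2)*(y2 1)*(y2 3)*k2*k3*y^2 + (-9)*(y1 0)*(y1 2)*(y2 1)^2*k1*k2*r*x + (-9)*(y1 0)*(y1 2)*(y2 1)^2*k2*k3*r*x + 9*(y1 0)*(y1 2)*(y2 2)*(y2 3)*k1*k3*r*y + 9*(y1 0)*(y1 2)*(y2 2)*(y2 3)*k2*k3*r*y + (-9)*(y1 0)*(y1 2)*(y2 3)^2*k1*k2*r*x + (-9)*(y1 0)*(y1 2)*(y2 3)^2*k2*k3*r*x + (-9)*(y1 0)*(y1 3)*(y2 0)*(y2 1)*k1*k2*r*x + (-9)*(y1 0)*(y1 3)*(y2 0)*(y2 1)*k2*k3*r*x + 9*(y1 0)*(y1 3)*(y2 0)*(y2 2)*k1*k2*x*y + 9*(y1 0)*(y1 3)*(y2 0)*(y2 2)*k1*k3*x*y + 18*(y1 0)*(y1 3)*(y2 0)*(y2 2)*k2*k3*x*y + (-18)*(y1 0)*(y1 3)*(y2 0)*(y2 3)*k1*k2*x^2 + (-18)*(y1 0)*(y1 3)*(y2 0)*(y2 3)*k2*k3*x^2 + 18*(y1 0)*(y1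 3)*(y2 1)*(y2 2)*k1*k2*x^2 + 9*(y1 0)*(y1 3)*(y2 1)*(y2 2)*k1*k3*r^2 + (-9)*(y1 0)*(y1 3)*(y2 1)*(y2 2)*k1*k3*x^2 + 27*(y1 0)*(y1 3)*(y2 1)*(y2 2)*k1*k3*y^2 + 9*(y1 0)*(y1 3)*(y2 1)*(y2 2)*k2*k3*r^2 + 9*(y1 0)*(y1 3)*(y2 1)*(y2 2)*k2*k3*x^2 + 27*(y1 0)*(y1 3)*(y2 1)*(y2 2)*k2*k3*y^2 + (-9)*(y1 0)*(y1 3)*(y2 1)*(y2 3)*k1*k2*x*y + (-9)*(y1 0)*(y1 3)*(y2 1)*(y2 3)*k1*k3*x*y + (-18)*(y1 0)*(y1 3)*(y2 1)*(y2 3)*k2*k3*x*y + (-9)*(y1 0)*(y1 3)*(y2 1)^2*k1*k3*r*y + (-9)*(y1 0)*(y1 3)*(y2 1)^2*k2*k3*r*y + 9*(y1 0)*(y1 3)*(y2 2)*(y2 3)*k1*k2*r*x + 9*(y1 0)*(y1 3)*(y2 2)*(y2 3)*k2*k3*r*x + (-9)*(y1 0)*(y1 3)*(y2 2)^2*k1*k3*r*y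 + (-9)*(y1 0)*(y1 3)*(y2 2)^2*k2*k3*r*y + (-9)*(y1 0)^2*(y2 1)*(y2 2)*k1*k3*r*y + (-9)*(y1 0)^2*(y2 1)*(y2 2)*k2*k3*r*y + 9*(y1 0)^2*(y2 1)*(y2 3)*k1*k2*r*x + 9*(y1 0)^2*(y2 1)*(y2 3)*k2*k3*r*x + 9*(y1 0)^2*(y2 1)^2*k1*k2*x^2 + 9*(y1 0)^2*(y2 1)^2*k1*k3*y^2 + 9*(y1 0)^2*(y2 1)^2*k2*k3*x^2 + 9*(y1 0)^2*(y2 1)^2*k2*k3*y^2 + (-9)*(y1 0)^2*(y2 2)*(y2 3)*k1*k2*x*y + (-9)*(y1 0)^2*(y2 2)*(y2 3)*k1*k3*x*y + (-18)*(y1 0)^2*(y2 2)*(y2 3)*k2*k3*x*y + 9*(y1 0)^2*(y2 2)^2*k1*k3*y^2 + 9*(y1 0)^2*(y2 2)^2*k2*k3*y^2 + 9*(y1 0)^2*(y2 3)^2*k1*k2*x^2 + 9*(y1 0)^2*(y2 3)^2*k2*k3*x^2 + 9*(y1 1)*(y1 2)*(y2 0)*(y2 1)*k1*k2*r*x + 9*(y1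 1)*(y1 2)*(y2 0)*(y2 1)*k2*k3*r*x + 9*(y1 1)*(y1 2)*(y2 0)*(y2 2)*k1*k2*x*y + 9*(y1 1)*(y1 2)*(y2 0)*(y2 2)*k1*k3*x*y + 18*(y1 1)*(y1 2)*(y2 0)*(y2 2)*k2*k3*x*y + 18*(y1 1)*(y1 2)*(y2 0)*(y2 3)*k1*k2*x^2 + 9*(y1 1)*(y1 2)*(y2 0)*(y2 3)*k1*k3*r^2 + (-9)*(y1 1)*(y1 2)*(y2 0)*(y2 3)*k1*k3*x^2 + 27*(y1 1)*(y1 2)*(y2 0)*(y2 3)*k1*k3*y^2 + 9*(y1 1)*(y1 2)*(y2 0)*(y2 3)*k2*k3*r^2 + 9*(y1 1)*(y1 2)*(y2 0)*(y2 3)*k2*k3*x^2 + 27*(y1 1)*(y1 2)*(y2 0)*(y2 3)*k2*k3*y^2 + (-9)*(y1 1)*(y1 2)*(y2 0)^2*k1*k3*r*y + (-9)*(y1 1)*(y1 2)*(y2 0)^2*k2*k3*r*y + (-18)*(y1 1)*(y1 2)*(y2 1)*(y2 2)*k1*k2*x^2 + (-18)*(y1 1)*(y1 2)*(y2 1)*(y2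 2)*k2*k3*x^2 + (-9)*(y1 1)*(y1 2)*(y2 1)*(y2 3)*k1*k2*x*y + (-9)*(y1 1)*(y1 2)*(y2 1)*(y2 3)*k1*k3*x*y + (-18)*(y1 1)*(y1 2)*(y2 1)*(y2 3)*k2*k3*x*y + (-9)*(y1 1)*(y1 2)*(y2 2)*(y2 3)*k1*k2*r*x + (-9)*(y1 1)*(y1 2)*(y2 2)*(y2 3)*k2*k3*r*x + (-9)*(y1 1)*(y1 2)*(y2 3)^2*k1*k3*r*y + (-9)*(y1 1)*(y1 2)*(y2 3)^2*k2*k3*r*y + 9*(y1 1)*(y1 3)*(y2 0)*(y2 1)*k1*k3*r*y + 9*(y1 1)*(y1 3)*(y2 0)*(y2 1)*k2*k3*r*y + (-9)*(y1 1)*(y1 3)*(y2 0)*(y2 2)*k1*k2*r^2 + (-27)*(y1 1)*(y1 3)*(y2 0)*(y2 2)*k1*k2*x^2 + 9*(y1 1)*(y1 3)*(y2 0)*(y2 2)*k1*k2*y^2 + (-18)*(y1 1)*(y1 3)*(y2 0)*(y2 2)*k1*k3*y^2 + (-9)*(y1 1)*(y1 3)*(y2 0)*(y2 2)*k2*k3*r^2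 + (-27)*(y1 1)*(y1 3)*(y2 0)*(y2 2)*k2*k3*x^2 + (-9)*(y1 1)*(y1 3)*(y2 0)*(y2 2)*k2*k3*y^2 + (-9)*(y1 1)*(y1 3)*(y2 0)*(y2 3)*k1*k2*x*y + (-9)*(y1 1)*(y1 3)*(y2 0)*(y2 3)*k1*k3*x*y + (-18)*(y1 1)*(y1 3)*(y2 0)*(y2 3)*k2*k3*x*y + 9*(y1 1)*(y1 3)*(y2 0)^2*k1*k2*r*x + 9*(y1 1)*(y1 3)*(y2 0)^2*k2*k3*r*x + (-9)*(y1 1)*(y1 3)*(y2 1)*(y2 2)*k1*k2*x*y + (-9)*(y1 1)*(y1 3)*(y2 1)*(y2 2)*k1*k3*x*y + (-18)*(y1 1)*(y1 3)*(y2 1)*(y2 2)*k2*k3*x*y + (-18)*(y1 1)*(y1 3)*(y2 1)*(y2 3)*k1*k3*y^2 + (-18)*(y1 1)*(y1 3)*(y2 1)*(y2 3)*k2*k3*y^2 + 9*(y1 1)*(y1 3)*(y2 2)*(y2 3)*k1*k3*r*y + 9*(y1 1)*(y1 3)*(y2 2)*(y2 3)*k2*k3*r*y + 9*(y1 1)*(y1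 3)*(y2 2)^2*k1*k2*r*x + 9*(y1 1)*(y1 3)*(y2 2)^2*k2*k3*r*x + (-9)*(y1 1)^2*(y2 0)*(y2 2)*k1*k2*r*x + (-9)*(y1 1)^2*(y2 0)*(y2 2)*k2*k3*r*x + (-9)*(y1 1)^2*(y2 0)*(y2 3)*k1*k3*r*y + (-9)*(y1 1)^2*(y2 0)*(y2 3)*k2*k3*r*y + 9*(y1 1)^2*(y2 0)^2*k1*k2*x^2 + 9*(y1 1)^2*(y2 0)^2*k1*k3*y^2 + 9*(y1 1)^2*(y2 0)^2*k2*k3*x^2 + 9*(y1 1)^2*(y2 0)^2*k2*k3*y^2 + 9*(y1 1)^2*(y2 2)*(y2 3)*k1*k2*x*y + 9*(y1 1)^2*(y2 2)*(y2 3)*k1*k3*x*y + 18*(y1 1)^2*(y2 2)*(y2 3)*k2*k3*x*y + 9*(y1 1)^2*(y2 2)^2*k1*k2*x^2 + 9*(y1 1)^2*(y2 2)^2*k2*k3*x^2 + 9*(y1 1)^2*(y2 3)^2*k1*k3*y^2 + 9*(y1 1)^2*(y2 3)^2*k2*k3*y^2 + 9*(y1 2)*(y1 3)*(y2 0)*(y2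 1)*k1*k2*r^2 + 9*(y1 2)*(y1 3)*(y2 0)*(y2 1)*k1*k2*x^2 + (-9)*(y1 2)*(y1 3)*(y2 0)*(y2 1)*k1*k2*y^2 + (-9)*(y1 2)*(y1 3)*(y2 0)*(y2 1)*k1*k3*r^2 + 9*(y1 2)*(y1 3)*(y2 0)*(y2 1)*k1*k3*x^2 + (-9)*(y1 2)*(y1 3)*(y2 0)*(y2 1)*k1*k3*y^2 + 18*(y1 2)*(y1 3)*(y2 0)*(y2 1)*k2*k3*x^2 + (-18)*(y1 2)*(y1 3)*(y2 0)*(y2 1)*k2*k3*y^2 + 9*(y1 2)*(y1 3)*(y2 0)*(y2 2)*k1*k3*r*y + 9*(y1 2)*(y1 3)*(y2 0)*(y2 2)*k2*k3*r*y + 9*(y1 2)*(y1 3)*(y2 0)*(y2 3)*k1*k2*r*x + 9*(y1 2)*(y1 3)*(y2 0)*(y2 3)*k2*k3*r*x + (-9)*(y1 2)*(y1 3)*(y2 0)^2*k1*k2*x*y + (-9)*(y1 2)*(y1 3)*(y2 0)^2*k1*k3*x*y + (-18)*(y1 2)*(y1 3)*(y2 0)^2*k2*k3*x*y + (-9)*(y1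 2)*(y1 3)*(y2 1)*(y2 2)*k1*k2*r*x + (-9)*(y1 2)*(y1 3)*(y2 1)*(y2 2)*k2*k3*r*x + 9*(y1 2)*(y1 3)*(y2 1)*(y2 3)*k1*k3*r*y + 9*(y1 2)*(y1 3)*(y2 1)*(y2 3)*k2*k3*r*y + 9*(y1 2)*(y1 3)*(y2 1)^2*k1*k2*x*y + 9*(y1 2)*(y1 3)*(y2 1)^2*k1*k3*x*y + 18*(y1 2)*(y1 3)*(y2 1)^2*k2*k3*x*y + (-18)*(y1 2)*(y1 3)*(y2 2)*(y2 3)*k1*k2*x^2 + (-18)*(y1 2)*(y1 3)*(y2 2)*(y2 3)*k1*k3*y^2 + (-18)*(y1 2)*(y1 3)*(y2 2)*(y2 3)*k2*k3*x^2 + (-18)*(y1 2)*(y1 3)*(y2 2)*(y2 3)*k2*k3*y^2 + (-9)*(y1 2)^2*(y2 0)*(y2 1)*k1*k2*x*y + (-9)*(y1 2)^2*(y2 0)*(y2 1)*k1*k3*x*y + (-18)*(y1 2)^2*(y2 0)*(y2 1)*k2*k3*x*y + (-9)*(y1 2)^2*(y2 0)*(y2 3)*k1*k3*r*y + (-9)*(y1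 2)^2*(y2 0)*(y2 3)*k2*k3*r*y + 9*(y1 2)^2*(y2 0)^2*k1*k3*y^2 + 9*(y1 2)^2*(y2 0)^2*k2*k3*y^2 + 9*(y1 2)^2*(y2 1)*(y2 3)*k1*k2*r*x + 9*(y1 2)^2*(y2 1)*(y2 3)*k2*k3*r*x + 9*(y1 2)^2*(y2 1)^2*k1*k2*x^2 + 9*(y1 2)^2*(y2 1)^2*k2*k3*x^2 + 9*(y1 2)^2*(y2 3)^2*k1*k2*x^2 + 9*(y1 2)^2*(y2 3)^2*k1*k3*y^2 + 9*(y1 2)^2*(y2 3)^2*k2*k3*x^2 + 9*(y1 2)^2*(y2 3)^2*k2*k3*y^2 + 9*(y1 3)^2*(y2 0)*(y2 1)*k1*k2*x*y + 9*(y1 3)^2*(y2 0)*(y2 1)*k1*k3*x*y + 18*(y1 3)^2*(y2 0)*(y2 1)*k2*k3*x*y + (-9)*(y1 3)^2*(y2 0)*(y2 2)*k1*k2*r*x + (-9)*(y1 3)^2*(y2 0)*(y2 2)*k2*k3*r*x + 9*(y1 3)^2*(y2 0)^2*k1*k2*x^2 + 9*(y1 3)^2*(y2 0)^2*k2*k3*x^2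 + (-9)*(y1 3)^2*(y2 1)*(y2 2)*k1*k3*r*y + (-9)*(y1 3)^2*(y2 1)*(y2 2)*k2*k3*r*y + 9*(y1 3)^2*(y2 1)^2*k1*k3*y^2 + 9*(y1 3)^2*(y2 1)^2*k2*k3*y^2 + 9*(y1 3)^2*(y2 2)^2*k1*k2*x^2 + 9*(y1 3)^2*(y2 2)^2*k1*k3*y^2 + 9*(y1 3)^2*(y2 2)^2*k2*k3*x^2 + 9*(y1 3)^2*(y2 2)^2*k2*k3*y^2) * hr + ((-18)*(y1 0)*(y1 1)*(y2 0)*(y2 1)*k1*k2*k3^2 + (-18)*(y1 0)*(y1 1)*(y2 0)*(y2 1)*k1*k2*x^2 + (-18)*(y1 0)*(y1 1)*(y2 0)*(y2 1)*k1*k2*y^2 + (-18)*(y1 0)*(y1 1)*(y2 0)*(y2 1)*k1*k2^2*k3 + (-18)*(y1 0)*(y1 1)*(y2 0)*(y2 1)*k1*k3*y^2 + (-18)*(y1 0)*(y1 1)*(y2 0)*(y2 1)*k1^2*k2*k3 + (-18)*(y1 0)*(y1 1)*(y2 0)*(y2 1)*k2*k3*x^2 + (-36)*(y1 0)*(y1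 1)*(y2 0)*(y2 1)*k2*k3*y^2 + (-18)*(y1 0)*(y1 1)*(y2 0)*(y2 1)*k2^2*k3^2 + 18*(y1 0)*(y1 1)*(y2 0)*(y2 2)*k1*k2*r*y + 18*(y1 0)*(y1 1)*(y2 0)*(y2 2)*k2*k3*r*y + (-18)*(y1 0)*(y1 1)*(y2 0)*(y2 3)*k1*k2*r*x + (-18)*(y1 0)*(y1 1)*(y2 0)*(y2 3)*k2*k3*r*x + 18*(y1 0)*(y1 1)*(y2 1)*(y2 2)*k1*k2*r*x + 18*(y1 0)*(y1 1)*(y2 1)*(y2 2)*k2*k3*r*x + 18*(y1 0)*(y1 1)*(y2 1)*(y2 3)*k1*k2*r*y + 18*(y1 0)*(y1 1)*(y2 1)*(y2 3)*k2*k3*r*y + 18*(y1 0)*(y1 1)*(y2 2)*(y2 3)*k1*k2*k3^2 + 18*(y1 0)*(y1 1)*(y2 2)*(y2 3)*k1*k2*x^2 + (-18)*(y1 0)*(y1 1)*(y2 2)*(y2 3)*k1*k2*y^2 + 18*(y1 0)*(y1 1)*(y2 2)*(y2 3)*k1*k2^2*k3 + 18*(y1 0)*(y1 1)*(y2 2)*(y2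 3)*k1*k3*y^2 + 18*(y1 0)*(y1 1)*(y2 2)*(y2 3)*k1^2*k2*k3 + 18*(y1 0)*(y1 1)*(y2 2)*(y2 3)*k2*k3*x^2 + 18*(y1 0)*(y1 1)*(y2 2)*(y2 3)*k2^2*k3^2 + (-18)*(y1 0)*(y1 1)*(y2 2)^2*k1*k2*x*y + (-18)*(y1 0)*(y1 1)*(y2 2)^2*k2*k3*x*y + 18*(y1 0)*(y1 1)*(y2 3)^2*k1*k2*x*y + 18*(y1 0)*(y1 1)*(y2 3)^2*k2*k3*x*y + 18*(y1 0)*(y1 2)*(y2 0)*(y2 1)*k1*k2*r*y + 18*(y1 0)*(y1 2)*(y2 0)*(y2 1)*k2*k3*r*y + (-18)*(y1 0)*(y1 2)*(y2 0)*(y2 2)*k1*k2*y^2 + (-18)*(y1 0)*(y1 2)*(y2 0)*(y2 2)*k2*k3*y^2 + 18*(y1 0)*(y1 2)*(y2 0)*(y2 3)*k1*k2*x*y + 18*(y1 0)*(y1 2)*(y2 0)*(y2 3)*k2*k3*x*y + 18*(y1 0)*(y1 2)*(y2 1)*(y2 2)*k1*k2*x*y + 18*(y1 0)*(y1 2)*(y2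 1)*(y2 2)*k2*k3*x*y + (-36)*(y1 0)*(y1 2)*(y2 1)*(y2 3)*k1*k2*k3^2 + (-36)*(y1 0)*(y1 2)*(y2 1)*(y2 3)*k1*k2*x^2 + (-18)*(y1 0)*(y1 2)*(y2 1)*(y2 3)*k1*k2*y^2 + (-36)*(y1 0)*(y1 2)*(y2 1)*(y2 3)*k1*k2^2*k3 + (-36)*(y1 0)*(y1 2)*(y2 1)*(y2 3)*k1*k3*y^2 + (-36)*(y1 0)*(y1 2)*(y2 1)*(y2 3)*k1^2*k2*k3 + (-36)*(y1 0)*(y1 2)*(y2 1)*(y2 3)*k2*k3*x^2 + (-54)*(y1 0)*(y1 2)*(y2 1)*(y2 3)*k2*k3*y^2 + (-36)*(y1 0)*(y1 2)*(y2 1)*(y2 3)*k2^2*k3^2 + (-18)*(y1 0)*(y1 2)*(y2 1)^2*k1*k2*r*x + (-18)*(y1 0)*(y1 2)*(y2 1)^2*k2*k3*r*x + 18*(y1 0)*(y1 2)*(y2 2)*(y2 3)*k1*k2*r*y + 18*(y1 0)*(y1 2)*(y2 2)*(y2 3)*k2*k3*r*y + (-18)*(y1 0)*(y1 2)*(y2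 3)^2*k1*k2*r*x + (-18)*(y1 0)*(y1 2)*(y2 3)^2*k2*k3*r*x + (-18)*(y1 0)*(y1 3)*(y2 0)*(y2 1)*k1*k2*r*x + (-18)*(y1 0)*(y1 3)*(y2 0)*(y2 1)*k2*k3*r*x + 18*(y1 0)*(y1 3)*(y2 0)*(y2 2)*k1*k2*x*y + 18*(y1 0)*(y1 3)*(y2 0)*(y2 2)*k2*k3*x*y + (-18)*(y1 0)*(y1 3)*(y2 0)*(y2 3)*k1*k2*k3^2 + (-18)*(y1 0)*(y1 3)*(y2 0)*(y2 3)*k1*k2*x^2 + (-18)*(y1 0)*(y1 3)*(y2 0)*(y2 3)*k1*k2^2*k3 + (-18)*(y1 0)*(y1 3)*(y2 0)*(y2 3)*k1*k3*y^2 + (-18)*(y1 0)*(y1 3)*(y2 0)*(y2 3)*k1^2*k2*k3 + (-18)*(y1 0)*(y1 3)*(y2 0)*(y2 3)*k2*k3*x^2 + (-18)*(y1 0)*(y1 3)*(y2 0)*(y2 3)*k2*k3*y^2 + (-18)*(y1 0)*(y1 3)*(y2 0)*(y2 3)*k2^2*k3^2 + 18*(y1 0)*(y1 3)*(y2 1)*(y2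 2)*k1*k2*k3^2 + 18*(y1 0)*(y1 3)*(y2 1)*(y2 2)*k1*k2*x^2 + 36*(y1 0)*(y1 3)*(y2 1)*(y2 2)*k1*k2*y^2 + 18*(y1 0)*(y1 3)*(y2 1)*(y2 2)*k1*k2^2*k3 + 18*(y1 0)*(y1 3)*(y2 1)*(y2 2)*k1*k3*y^2 + 18*(y1 0)*(y1 3)*(y2 1)*(y2 2)*k1^2*k2*k3 + 18*(y1 0)*(y1 3)*(y2 1)*(y2 2)*k2*k3*x^2 + 54*(y1 0)*(y1 3)*(y2 1)*(y2 2)*k2*k3*y^2 + 18*(y1 0)*(y1 3)*(y2 1)*(y2 2)*k2^2*k3^2 + (-18)*(y1 0)*(y1 3)*(y2 1)*(y2 3)*k1*k2*x*y + (-18)*(y1 0)*(y1 3)*(y2 1)*(y2 3)*k2*k3*x*y + (-18)*(y1 0)*(y1 3)*(y2 1)^2*k1*k2*r*y + (-18)*(y1 0)*(y1 3)*(y2 1)^2*k2*k3*r*y + 18*(y1 0)*(y1 3)*(y2 2)*(y2 3)*k1*k2*r*x + 18*(y1 0)*(y1 3)*(y2 2)*(y2 3)*k2*k3*r*x + (-18)*(y1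 0)*(y1 3)*(y2 2)^2*k1*k2*r*y + (-18)*(y1 0)*(y1 3)*(y2 2)^2*k2*k3*r*y + (-18)*(y1 0)^2*(y2 1)*(y2 2)*k1*k2*r*y + (-18)*(y1 0)^2*(y2 1)*(y2 2)*k2*k3*r*y + 18*(y1 0)^2*(y2 1)*(y2 3)*k1*k2*r*x + 18*(y1 0)^2*(y2 1)*(y2 3)*k2*k3*r*x + 9*(y1 0)^2*(y2 1)^2*k1*k2*k3^2 + 9*(y1 0)^2*(y2 1)^2*k1*k2*x^2 + 9*(y1 0)^2*(y2 1)^2*k1*k2*y^2 + 9*(y1 0)^2*(y2 1)^2*k1*k2^2*k3 + 9*(y1 0)^2*(y2 1)^2*k1*k3*y^2 + 9*(y1 0)^2*(y2 1)^2*k1^2*k2*k3 + 9*(y1 0)^2*(y2 1)^2*k2*k3*x^2 + 18*(y1 0)^2*(y2 1)^2*k2*k3*y^2 + 9*(y1 0)^2*(y2 1)^2*k2^2*k3^2 + (-18)*(y1 0)^2*(y2 2)*(y2 3)*k1*k2*x*y + (-18)*(y1 0)^2*(y2 2)*(y2 3)*k2*k3*x*y + 9*(y1 0)^2*(y2 2)^2*k1*k2*y^2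 + 9*(y1 0)^2*(y2 2)^2*k2*k3*y^2 + 9*(y1 0)^2*(y2 3)^2*k1*k2*k3^2 + 9*(y1 0)^2*(y2 3)^2*k1*k2*x^2 + 9*(y1 0)^2*(y2 3)^2*k1*k2^2*k3 + 9*(y1 0)^2*(y2 3)^2*k1*k3*y^2 + 9*(y1 0)^2*(y2 3)^2*k1^2*k2*k3 + 9*(y1 0)^2*(y2 3)^2*k2*k3*x^2 + 9*(y1 0)^2*(y2 3)^2*k2*k3*y^2 + 9*(y1 0)^2*(y2 3)^2*k2^2*k3^2 + 18*(y1 1)*(y1 2)*(y2 0)*(y2 1)*k1*k2*r*x + 18*(y1 1)*(y1 2)*(y2 0)*(y2 1)*k2*k3*r*x + 18*(y1 1)*(y1 2)*(y2 0)*(y2 2)*k1*k2*x*y + 18*(y1 1)*(y1 2)*(y2 0)*(y2 2)*k2*k3*x*y + 18*(y1 1)*(y1 2)*(y2 0)*(y2 3)*k1*k2*k3^2 + 18*(y1 1)*(y1 2)*(y2 0)*(y2 3)*k1*k2*x^2 + 36*(y1 1)*(y1 2)*(y2 0)*(y2 3)*k1*k2*y^2 + 18*(y1 1)*(y1 2)*(y2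 0)*(y2 3)*k1*k2^2*k3 + 18*(y1 1)*(y1 2)*(y2 0)*(y2 3)*k1*k3*y^2 + 18*(y1 1)*(y1 2)*(y2 0)*(y2 3)*k1^2*k2*k3 + 18*(y1 1)*(y1 2)*(y2 0)*(y2 3)*k2*k3*x^2 + 54*(y1 1)*(y1 2)*(y2 0)*(y2 3)*k2*k3*y^2 + 18*(y1 1)*(y1 2)*(y2 0)*(y2 3)*k2^2*k3^2 + (-18)*(y1 1)*(y1 2)*(y2 0)^2*k1*k2*r*y + (-18)*(y1 1)*(y1 2)*(y2 0)^2*k2*k3*r*y + (-18)*(y1 1)*(y1 2)*(y2 1)*(y2 2)*k1*k2*k3^2 + (-18)*(y1 1)*(y1 2)*(y2 1)*(y2 2)*k1*k2*x^2 + (-18)*(y1 1)*(y1 2)*(y2 1)*(y2 2)*k1*k2^2*k3 + (-18)*(y1 1)*(y1 2)*(y2 1)*(y2 2)*k1*k3*y^2 + (-18)*(y1 1)*(y1 2)*(y2 1)*(y2 2)*k1^2*k2*k3 + (-18)*(y1 1)*(y1 2)*(y2 1)*(y2 2)*k2*k3*x^2 + (-18)*(y1 1)*(y1 2)*(y2 1)*(y2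 2)*k2*k3*y^2 + (-18)*(y1 1)*(y1 2)*(y2 1)*(y2 2)*k2^2*k3^2 + (-18)*(y1 1)*(y1 2)*(y2 1)*(y2 3)*k1*k2*x*y + (-18)*(y1 1)*(y1 2)*(y2 1)*(y2 3)*k2*k3*x*y + (-18)*(y1 1)*(y1 2)*(y2 2)*(y2 3)*k1*k2*r*x + (-18)*(y1 1)*(y1 2)*(y2 2)*(y2 3)*k2*k3*r*x + (-18)*(y1 1)*(y1 2)*(y2 3)^2*k1*k2*r*y + (-18)*(y1 1)*(y1 2)*(y2 3)^2*k2*k3*r*y + 18*(y1 1)*(y1 3)*(y2 0)*(y2 1)*k1*k2*r*y + 18*(y1 1)*(y1 3)*(y2 0)*(y2 1)*k2*k3*r*y + (-36)*(y1 1)*(y1 3)*(y2 0)*(y2 2)*k1*k2*k3^2 + (-36)*(y1 1)*(y1 3)*(y2 0)*(y2 2)*k1*k2*x^2 + (-18)*(y1 1)*(y1 3)*(y2 0)*(y2 2)*k1*k2*y^2 + (-36)*(y1 1)*(y1 3)*(y2 0)*(y2 2)*k1*k2^2*k3 + (-36)*(y1 1)*(y1 3)*(y2 0)*(y2 2)*k1*k3*y^2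 + (-36)*(y1 1)*(y1 3)*(y2 0)*(y2 2)*k1^2*k2*k3 + (-36)*(y1 1)*(y1 3)*(y2 0)*(y2 2)*k2*k3*x^2 + (-54)*(y1 1)*(y1 3)*(y2 0)*(y2 2)*k2*k3*y^2 + (-36)*(y1 1)*(y1 3)*(y2 0)*(y2 2)*k2^2*k3^2 + (-18)*(y1 1)*(y1 3)*(y2 0)*(y2 3)*k1*k2*x*y + (-18)*(y1 1)*(y1 3)*(y2 0)*(y2 3)*k2*k3*x*y + 18*(y1 1)*(y1 3)*(y2 0)^2*k1*k2*r*x + 18*(y1 1)*(y1 3)*(y2 0)^2*k2*k3*r*x + (-18)*(y1 1)*(y1 3)*(y2 1)*(y2 2)*k1*k2*x*y + (-18)*(y1 1)*(y1 3)*(y2 1)*(y2 2)*k2*k3*x*y + (-18)*(y1 1)*(y1 3)*(y2 1)*(y2 3)*k1*k2*y^2 + (-18)*(y1 1)*(y1 3)*(y2 1)*(y2 3)*k2*k3*y^2 + 18*(y1 1)*(y1 3)*(y2 2)*(y2 3)*k1*k2*r*y + 18*(y1 1)*(y1 3)*(y2 2)*(y2 3)*k2*k3*r*y + 18*(y1 1)*(y1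 3)*(y2 2)^2*k1*k2*r*x + 18*(y1 1)*(y1 3)*(y2 2)^2*k2*k3*r*x + (-18)*(y1 1)^2*(y2 0)*(y2 2)*k1*k2*r*x + (-18)*(y1 1)^2*(y2 0)*(y2 2)*k2*k3*r*x + (-18)*(y1 1)^2*(y2 0)*(y2 3)*k1*k2*r*y + (-18)*(y1 1)^2*(y2 0)*(y2 3)*k2*k3*r*y + 9*(y1 1)^2*(y2 0)^2*k1*k2*k3^2 + 9*(y1 1)^2*(y2 0)^2*k1*k2*x^2 + 9*(y1 1)^2*(y2 0)^2*k1*k2*y^2 + 9*(y1 1)^2*(y2 0)^2*k1*k2^2*k3 + 9*(y1 1)^2*(y2 0)^2*k1*k3*y^2 + 9*(y1 1)^2*(y2 0)^2*k1^2*k2*k3 + 9*(y1 1)^2*(y2 0)^2*k2*k3*x^2 + 18*(y1 1)^2*(y2 0)^2*k2*k3*y^2 + 9*(y1 1)^2*(y2 0)^2*k2^2*k3^2 + 18*(y1 1)^2*(y2 2)*(y2 3)*k1*k2*x*y + 18*(y1 1)^2*(y2 2)*(y2 3)*k2*k3*x*y + 9*(y1 1)^2*(y2 2)^2*k1*k2*k3^2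 + 9*(y1 1)^2*(y2 2)^2*k1*k2*x^2 + 9*(y1 1)^2*(y2 2)^2*k1*k2^2*k3 + 9*(y1 1)^2*(y2 2)^2*k1*k3*y^2 + 9*(y1 1)^2*(y2 2)^2*k1^2*k2*k3 + 9*(y1 1)^2*(y2 2)^2*k2*k3*x^2 + 9*(y1 1)^2*(y2 2)^2*k2*k3*y^2 + 9*(y1 1)^2*(y2 2)^2*k2^2*k3^2 + 9*(y1 1)^2*(y2 3)^2*k1*k2*y^2 + 9*(y1 1)^2*(y2 3)^2*k2*k3*y^2 + 18*(y1 2)*(y1 3)*(y2 0)*(y2 1)*k1*k2*k3^2 + 18*(y1 2)*(y1 3)*(y2 0)*(y2 1)*k1*k2*x^2 + (-18)*(y1 2)*(y1 3)*(y2 0)*(y2 1)*k1*k2*y^2 + 18*(y1 2)*(y1 3)*(y2 0)*(y2 1)*k1*k2^2*k3 + 18*(y1 2)*(y1 3)*(y2 0)*(y2 1)*k1*k3*y^2 + 18*(y1 2)*(y1 3)*(y2 0)*(y2 1)*k1^2*k2*k3 + 18*(y1 2)*(y1 3)*(y2 0)*(y2 1)*k2*k3*x^2 + 18*(y1 2)*(y1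 3)*(y2 0)*(y2 1)*k2^2*k3^2 + 18*(y1 2)*(y1 3)*(y2 0)*(y2 2)*k1*k2*r*y + 18*(y1 2)*(y1 3)*(y2 0)*(y2 2)*k2*k3*r*y + 18*(y1 2)*(y1 3)*(y2 0)*(y2 3)*k1*k2*r*x + 18*(y1 2)*(y1 3)*(y2 0)*(y2 3)*k2*k3*r*x + (-18)*(y1 2)*(y1 3)*(y2 0)^2*k1*k2*x*y + (-18)*(y1 2)*(y1 3)*(y2 0)^2*k2*k3*x*y + (-18)*(y1 2)*(y1 3)*(y2 1)*(y2 2)*k1*k2*r*x + (-18)*(y1 2)*(y1 3)*(y2 1)*(y2 2)*k2*k3*r*x + 18*(y1 2)*(y1 3)*(y2 1)*(y2 3)*k1*k2*r*y + 18*(y1 2)*(y1 3)*(y2 1)*(y2 3)*k2*k3*r*y + 18*(y1 2)*(y1 3)*(y2 1)^2*k1*k2*x*y + 18*(y1 2)*(y1 3)*(y2 1)^2*k2*k3*x*y + (-18)*(y1 2)*(y1 3)*(y2 2)*(y2 3)*k1*k2*k3^2 + (-18)*(y1 2)*(y1 3)*(y2 2)*(y2 3)*k1*k2*x^2 + (-18)*(y1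 2)*(y1 3)*(y2 2)*(y2 3)*k1*k2*y^2 + (-18)*(y1 2)*(y1 3)*(y2 2)*(y2 3)*k1*k2^2*k3 + (-18)*(y1 2)*(y1 3)*(y2 2)*(y2 3)*k1*k3*y^2 + (-18)*(y1 2)*(y1 3)*(y2 2)*(y2 3)*k1^2*k2*k3 + (-18)*(y1 2)*(y1 3)*(y2 2)*(y2 3)*k2*k3*x^2 + (-36)*(y1 2)*(y1 3)*(y2 2)*(y2 3)*k2*k3*y^2 + (-18)*(y1 2)*(y1 3)*(y2 2)*(y2 3)*k2^2*k3^2 + (-18)*(y1 2)^2*(y2 0)*(y2 1)*k1*k2*x*y + (-18)*(y1 2)^2*(y2 0)*(y2 1)*k2*k3*x*y + (-18)*(y1 2)^2*(y2 0)*(y2 3)*k1*k2*r*y + (-18)*(y1 2)^2*(y2 0)*(y2 3)*k2*k3*r*y + 9*(y1 2)^2*(y2 0)^2*k1*k2*y^2 + 9*(y1 2)^2*(y2 0)^2*k2*k3*y^2 + 18*(y1 2)^2*(y2 1)*(y2 3)*k1*k2*r*x + 18*(y1 2)^2*(y2 1)*(y2 3)*k2*k3*r*x + 9*(y1 2)^2*(y2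 1)^2*k1*k2*k3^2 + 9*(y1 2)^2*(y2 1)^2*k1*k2*x^2 + 9*(y1 2)^2*(y2 1)^2*k1*k2^2*k3 + 9*(y1 2)^2*(y2 1)^2*k1*k3*y^2 + 9*(y1 2)^2*(y2 1)^2*k1^2*k2*k3 + 9*(y1 2)^2*(y2 1)^2*k2*k3*x^2 + 9*(y1 2)^2*(y2 1)^2*k2*k3*y^2 + 9*(y1 2)^2*(y2 1)^2*k2^2*k3^2 + 9*(y1 2)^2*(y2 3)^2*k1*k2*k3^2 + 9*(y1 2)^2*(y2 3)^2*k1*k2*x^2 + 9*(y1 2)^2*(y2 3)^2*k1*k2*y^2 + 9*(y1 2)^2*(y2 3)^2*k1*k2^2*k3 + 9*(y1 2)^2*(y2 3)^2*k1*k3*y^2 + 9*(y1 2)^2*(y2 3)^2*k1^2*k2*k3 + 9*(y1 2)^2*(y2 3)^2*k2*k3*x^2 + 18*(y1 2)^2*(y2 3)^2*k2*k3*y^2 + 9*(y1 2)^2*(y2 3)^2*k2^2*k3^2 + 18*(y1 3)^2*(y2 0)*(y2 1)*k1*k2*x*y + 18*(y1 3)^2*(y2 0)*(y2 1)*k2*k3*x*y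 + (-18)*(y1 3)^2*(y2 0)*(y2 2)*k1*k2*r*x + (-18)*(y1 3)^2*(y2 0)*(y2 2)*k2*k3*r*x + 9*(y1 3)^2*(y2 0)^2*k1*k2*k3^2 + 9*(y1 3)^2*(y2 0)^2*k1*k2*x^2 + 9*(y1 3)^2*(y2 0)^2*k1*k2^2*k3 + 9*(y1 3)^2*(y2 0)^2*k1*k3*y^2 + 9*(y1 3)^2*(y2 0)^2*k1^2*k2*k3 + 9*(y1 3)^2*(y2 0)^2*k2*k3*x^2 + 9*(y1 3)^2*(y2 0)^2*k2*k3*y^2 + 9*(y1 3)^2*(y2 0)^2*k2^2*k3^2 + (-18)*(y1 3)^2*(y2 1)*(y2 2)*k1*k2*r*y + (-18)*(y1 3)^2*(y2 1)*(y2 2)*k2*k3*r*y + 9*(y1 3)^2*(y2 1)^2*k1*k2*y^2 + 9*(y1 3)^2*(y2 1)^2*k2*k3*y^2 + 9*(y1 3)^2*(y2 2)^2*k1*k2*k3^2 + 9*(y1 3)^2*(y2 2)^2*k1*k2*x^2 + 9*(y1 3)^2*(y2 2)^2*k1*k2*y^2 + 9*(y1 3)^2*(y2 2)^2*k1*k2^2*k3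 + 9*(y1 3)^2*(y2 2)^2*k1*k3*y^2 + 9*(y1 3)^2*(y2 2)^2*k1^2*k2*k3 + 9*(y1 3)^2*(y2 2)^2*k2*k3*x^2 + 18*(y1 3)^2*(y2 2)^2*k2*k3*y^2 + 9*(y1 3)^2*(y2 2)^2*k2^2*k3^2) * hx + ((-36)*(y1 0)*(y1 1)*(y2 0)*(y2 1)*k1*k2*k3^2 + (-18)*(y1 0)*(y1 1)*(y2 0)*(y2 1)*k1*k3*y^2 + (-18)*(y1 0)*(y1 1)*(y2 0)*(y2 1)*k1^2*k3^2 + (-18)*(y1 0)*(y1 1)*(y2 0)*(y2 1)*k2*k3*y^2 + (-18)*(y1 0)*(y1 1)*(y2 0)*(y2 1)*k2^2*k3^2 + 18*(y1 0)*(y1 1)*(y2 0)*(y2 2)*k1*k3*r*y + 18*(y1 0)*(y1 1)*(y2 0)*(y2 2)*k2*k3*r*y + (-18)*(y1 0)*(y1 1)*(y2 0)*(y2 3)*k1*k3*r*x + (-18)*(y1 0)*(y1 1)*(y2 0)*(y2 3)*k2*k3*r*x + 18*(y1 0)*(y1 1)*(y2 1)*(y2 2)*k1*k3*r*x + 18*(y1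 0)*(y1 1)*(y2 1)*(y2 2)*k2*k3*r*x + 18*(y1 0)*(y1 1)*(y2 1)*(y2 3)*k1*k3*r*y + 18*(y1 0)*(y1 1)*(y2 1)*(y2 3)*k2*k3*r*y + 36*(y1 0)*(y1 1)*(y2 2)*(y2 3)*k1*k2*k3^2 + (-18)*(y1 0)*(y1 1)*(y2 2)*(y2 3)*k1*k3*y^2 + 18*(y1 0)*(y1 1)*(y2 2)*(y2 3)*k1^2*k3^2 + (-18)*(y1 0)*(y1 1)*(y2 2)*(y2 3)*k2*k3*y^2 + 18*(y1 0)*(y1 1)*(y2 2)*(y2 3)*k2^2*k3^2 + (-18)*(y1 0)*(y1 1)*(y2 2)^2*k1*k3*x*y + (-18)*(y1 0)*(y1 1)*(y2 2)^2*k2*k3*x*y + 18*(y1 0)*(y1 1)*(y2 3)^2*k1*k3*x*y + 18*(y1 0)*(y1 1)*(y2 3)^2*k2*k3*x*y + 18*(y1 0)*(y1 2)*(y2 0)*(y2 1)*k1*k3*r*y + 18*(y1 0)*(y1 2)*(y2 0)*(y2 1)*k2*k3*r*y + (-18)*(y1 0)*(y1 2)*(y2 0)*(y2 2)*k1*k3*y^2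 + (-18)*(y1 0)*(y1 2)*(y2 0)*(y2 2)*k2*k3*y^2 + 18*(y1 0)*(y1 2)*(y2 0)*(y2 3)*k1*k3*x*y + 18*(y1 0)*(y1 2)*(y2 0)*(y2 3)*k2*k3*x*y + 18*(y1 0)*(y1 2)*(y2 1)*(y2 2)*k1*k3*x*y + 18*(y1 0)*(y1 2)*(y2 1)*(y2 2)*k2*k3*x*y + (-72)*(y1 0)*(y1 2)*(y2 1)*(y2 3)*k1*k2*k3^2 + (-18)*(y1 0)*(y1 2)*(y2 1)*(y2 3)*k1*k3*y^2 + (-36)*(y1 0)*(y1 2)*(y2 1)*(y2 3)*k1^2*k3^2 + (-18)*(y1 0)*(y1 2)*(y2 1)*(y2 3)*k2*k3*y^2 + (-36)*(y1 0)*(y1 2)*(y2 1)*(y2 3)*k2^2*k3^2 + (-18)*(y1 0)*(y1 2)*(y2 1)^2*k1*k3*r*x + (-18)*(y1 0)*(y1 2)*(y2 1)^2*k2*k3*r*x + 18*(y1 0)*(y1 2)*(y2 2)*(y2 3)*k1*k3*r*y + 18*(y1 0)*(y1 2)*(y2 2)*(y2 3)*k2*k3*r*y + (-18)*(y1 0)*(y1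 2)*(y2 3)^2*k1*k3*r*x + (-18)*(y1 0)*(y1 2)*(y2 3)^2*k2*k3*r*x + (-18)*(y1 0)*(y1 3)*(y2 0)*(y2 1)*k1*k3*r*x + (-18)*(y1 0)*(y1 3)*(y2 0)*(y2 1)*k2*k3*r*x + 18*(y1 0)*(y1 3)*(y2 0)*(y2 2)*k1*k3*x*y + 18*(y1 0)*(y1 3)*(y2 0)*(y2 2)*k2*k3*x*y + (-36)*(y1 0)*(y1 3)*(y2 0)*(y2 3)*k1*k2*k3^2 + (-18)*(y1 0)*(y1 3)*(y2 0)*(y2 3)*k1^2*k3^2 + (-18)*(y1 0)*(y1 3)*(y2 0)*(y2 3)*k2^2*k3^2 + 36*(y1 0)*(y1 3)*(y2 1)*(y2 2)*k1*k2*k3^2 + 36*(y1 0)*(y1 3)*(y2 1)*(y2 2)*k1*k3*y^2 + 18*(y1 0)*(y1 3)*(y2 1)*(y2 2)*k1^2*k3^2 + 36*(y1 0)*(y1 3)*(y2 1)*(y2 2)*k2*k3*y^2 + 18*(y1 0)*(y1 3)*(y2 1)*(y2 2)*k2^2*k3^2 + (-18)*(y1 0)*(y1 3)*(y2 1)*(y2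 3)*k1*k3*x*y + (-18)*(y1 0)*(y1 3)*(y2 1)*(y2 3)*k2*k3*x*y + (-18)*(y1 0)*(y1 3)*(y2 1)^2*k1*k3*r*y + (-18)*(y1 0)*(y1 3)*(y2 1)^2*k2*k3*r*y + 18*(y1 0)*(y1 3)*(y2 2)*(y2 3)*k1*k3*r*x + 18*(y1 0)*(y1 3)*(y2 2)*(y2 3)*k2*k3*r*x + (-18)*(y1 0)*(y1 3)*(y2 2)^2*k1*k3*r*y + (-18)*(y1 0)*(y1 3)*(y2 2)^2*k2*k3*r*y + (-18)*(y1 0)^2*(y2 1)*(y2 2)*k1*k3*r*y + (-18)*(y1 0)^2*(y2 1)*(y2 2)*k2*k3*r*y + 18*(y1 0)^2*(y2 1)*(y2 3)*k1*k3*r*x + 18*(y1 0)^2*(y2 1)*(y2 3)*k2*k3*r*x + 18*(y1 0)^2*(y2 1)^2*k1*k2*k3^2 + 9*(y1 0)^2*(y2 1)^2*k1*k3*y^2 + 9*(y1 0)^2*(y2 1)^2*k1^2*k3^2 + 9*(y1 0)^2*(y2 1)^2*k2*k3*y^2 + 9*(y1 0)^2*(y2 1)^2*k2^2*k3^2 +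 (-18)*(y1 0)^2*(y2 2)*(y2 3)*k1*k3*x*y + (-18)*(y1 0)^2*(y2 2)*(y2 3)*k2*k3*x*y + 9*(y1 0)^2*(y2 2)^2*k1*k3*y^2 + 9*(y1 0)^2*(y2 2)^2*k2*k3*y^2 + 18*(y1 0)^2*(y2 3)^2*k1*k2*k3^2 + 9*(y1 0)^2*(y2 3)^2*k1^2*k3^2 + 9*(y1 0)^2*(y2 3)^2*k2^2*k3^2 + 18*(y1 1)*(y1 2)*(y2 0)*(y2 1)*k1*k3*r*x + 18*(y1 1)*(y1 2)*(y2 0)*(y2 1)*k2*k3*r*x + 18*(y1 1)*(y1 2)*(y2 0)*(y2 2)*k1*k3*x*y + 18*(y1 1)*(y1 2)*(y2 0)*(y2 2)*k2*k3*x*y + 36*(y1 1)*(y1 2)*(y2 0)*(y2 3)*k1*k2*k3^2 + 36*(y1 1)*(y1 2)*(y2 0)*(y2 3)*k1*k3*y^2 + 18*(y1 1)*(y1 2)*(y2 0)*(y2 3)*k1^2*k3^2 + 36*(y1 1)*(y1 2)*(y2 0)*(y2 3)*k2*k3*y^2 + 18*(y1 1)*(y1 2)*(y2 0)*(y2 3)*k2^2*k3^2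 + (-18)*(y1 1)*(y1 2)*(y2 0)^2*k1*k3*r*y + (-18)*(y1 1)*(y1 2)*(y2 0)^2*k2*k3*r*y + (-36)*(y1 1)*(y1 2)*(y2 1)*(y2 2)*k1*k2*k3^2 + (-18)*(y1 1)*(y1 2)*(y2 1)*(y2 2)*k1^2*k3^2 + (-18)*(y1 1)*(y1 2)*(y2 1)*(y2 2)*k2^2*k3^2 + (-18)*(y1 1)*(y1 2)*(y2 1)*(y2 3)*k1*k3*x*y + (-18)*(y1 1)*(y1 2)*(y2 1)*(y2 3)*k2*k3*x*y + (-18)*(y1 1)*(y1 2)*(y2 2)*(y2 3)*k1*k3*r*x + (-18)*(y1 1)*(y1 2)*(y2 2)*(y2 3)*k2*k3*r*x + (-18)*(y1 1)*(y1 2)*(y2 3)^2*k1*k3*r*y + (-18)*(y1 1)*(y1 2)*(y2 3)^2*k2*k3*r*y + 18*(y1 1)*(y1 3)*(y2 0)*(y2 1)*k1*k3*r*y + 18*(y1 1)*(y1 3)*(y2 0)*(y2 1)*k2*k3*r*y + (-72)*(y1 1)*(y1 3)*(y2 0)*(y2 2)*k1*k2*k3^2 + (-18)*(y1 1)*(y1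 3)*(y2 0)*(y2 2)*k1*k3*y^2 + (-36)*(y1 1)*(y1 3)*(y2 0)*(y2 2)*k1^2*k3^2 + (-18)*(y1 1)*(y1 3)*(y2 0)*(y2 2)*k2*k3*y^2 + (-36)*(y1 1)*(y1 3)*(y2 0)*(y2 2)*k2^2*k3^2 + (-18)*(y1 1)*(y1 3)*(y2 0)*(y2 3)*k1*k3*x*y + (-18)*(y1 1)*(y1 3)*(y2 0)*(y2 3)*k2*k3*x*y + 18*(y1 1)*(y1 3)*(y2 0)^2*k1*k3*r*x + 18*(y1 1)*(y1 3)*(y2 0)^2*k2*k3*r*x + (-18)*(y1 1)*(y1 3)*(y2 1)*(y2 2)*k1*k3*x*y + (-18)*(y1 1)*(y1 3)*(y2 1)*(y2 2)*k2*k3*x*y + (-18)*(y1 1)*(y1 3)*(y2 1)*(y2 3)*k1*k3*y^2 + (-18)*(y1 1)*(y1 3)*(y2 1)*(y2 3)*k2*k3*y^2 + 18*(y1 1)*(y1 3)*(y2 2)*(y2 3)*k1*k3*r*y + 18*(y1 1)*(y1 3)*(y2 2)*(y2 3)*k2*k3*r*y + 18*(y1 1)*(y1 3)*(y2 2)^2*k1*k3*r*x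 + 18*(y1 1)*(y1 3)*(y2 2)^2*k2*k3*r*x + (-18)*(y1 1)^2*(y2 0)*(y2 2)*k1*k3*r*x + (-18)*(y1 1)^2*(y2 0)*(y2 2)*k2*k3*r*x + (-18)*(y1 1)^2*(y2 0)*(y2 3)*k1*k3*r*y + (-18)*(y1 1)^2*(y2 0)*(y2 3)*k2*k3*r*y + 18*(y1 1)^2*(y2 0)^2*k1*k2*k3^2 + 9*(y1 1)^2*(y2 0)^2*k1*k3*y^2 + 9*(y1 1)^2*(y2 0)^2*k1^2*k3^2 + 9*(y1 1)^2*(y2 0)^2*k2*k3*y^2 + 9*(y1 1)^2*(y2 0)^2*k2^2*k3^2 + 18*(y1 1)^2*(y2 2)*(y2 3)*k1*k3*x*y + 18*(y1 1)^2*(y2 2)*(y2 3)*k2*k3*x*y + 18*(y1 1)^2*(y2 2)^2*k1*k2*k3^2 + 9*(y1 1)^2*(y2 2)^2*k1^2*k3^2 + 9*(y1 1)^2*(y2 2)^2*k2^2*k3^2 + 9*(y1 1)^2*(y2 3)^2*k1*k3*y^2 + 9*(y1 1)^2*(y2 3)^2*k2*k3*y^2 + 36*(y1 2)*(y1 3)*(y2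 0)*(y2 1)*k1*k2*k3^2 + (-18)*(y1 2)*(y1 3)*(y2 0)*(y2 1)*k1*k3*y^2 + 18*(y1 2)*(y1 3)*(y2 0)*(y2 1)*k1^2*k3^2 + (-18)*(y1 2)*(y1 3)*(y2 0)*(y2 1)*k2*k3*y^2 + 18*(y1 2)*(y1 3)*(y2 0)*(y2 1)*k2^2*k3^2 + 18*(y1 2)*(y1 3)*(y2 0)*(y2 2)*k1*k3*r*y + 18*(y1 2)*(y1 3)*(y2 0)*(y2 2)*k2*k3*r*y + 18*(y1 2)*(y1 3)*(y2 0)*(y2 3)*k1*k3*r*x + 18*(y1 2)*(y1 3)*(y2 0)*(y2 3)*k2*k3*r*x + (-18)*(y1 2)*(y1 3)*(y2 0)^2*k1*k3*x*y + (-18)*(y1 2)*(y1 3)*(y2 0)^2*k2*k3*x*y + (-18)*(y1 2)*(y1 3)*(y2 1)*(y2 2)*k1*k3*r*x + (-18)*(y1 2)*(y1 3)*(y2 1)*(y2 2)*k2*k3*r*x + 18*(y1 2)*(y1 3)*(y2 1)*(y2 3)*k1*k3*r*y + 18*(y1 2)*(y1 3)*(y2 1)*(y2 3)*k2*k3*r*y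 + 18*(y1 2)*(y1 3)*(y2 1)^2*k1*k3*x*y + 18*(y1 2)*(y1 3)*(y2 1)^2*k2*k3*x*y + (-36)*(y1 2)*(y1 3)*(y2 2)*(y2 3)*k1*k2*k3^2 + (-18)*(y1 2)*(y1 3)*(y2 2)*(y2 3)*k1*k3*y^2 + (-18)*(y1 2)*(y1 3)*(y2 2)*(y2 3)*k1^2*k3^2 + (-18)*(y1 2)*(y1 3)*(y2 2)*(y2 3)*k2*k3*y^2 + (-18)*(y1 2)*(y1 3)*(y2 2)*(y2 3)*k2^2*k3^2 + (-18)*(y1 2)^2*(y2 0)*(y2 1)*k1*k3*x*y + (-18)*(y1 2)^2*(y2 0)*(y2 1)*k2*k3*x*y + (-18)*(y1 2)^2*(y2 0)*(y2 3)*k1*k3*r*y + (-18)*(y1 2)^2*(y2 0)*(y2 3)*k2*k3*r*y + 9*(y1 2)^2*(y2 0)^2*k1*k3*y^2 + 9*(y1 2)^2*(y2 0)^2*k2*k3*y^2 + 18*(y1 2)^2*(y2 1)*(y2 3)*k1*k3*r*x + 18*(y1 2)^2*(y2 1)*(y2 3)*k2*k3*r*x + 18*(y1 2)^2*(y2 1)^2*k1*k2*k3^2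 + 9*(y1 2)^2*(y2 1)^2*k1^2*k3^2 + 9*(y1 2)^2*(y2 1)^2*k2^2*k3^2 + 18*(y1 2)^2*(y2 3)^2*k1*k2*k3^2 + 9*(y1 2)^2*(y2 3)^2*k1*k3*y^2 + 9*(y1 2)^2*(y2 3)^2*k1^2*k3^2 + 9*(y1 2)^2*(y2 3)^2*k2*k3*y^2 + 9*(y1 2)^2*(y2 3)^2*k2^2*k3^2 + 18*(y1 3)^2*(y2 0)*(y2 1)*k1*k3*x*y + 18*(y1 3)^2*(y2 0)*(y2 1)*k2*k3*x*y + (-18)*(y1 3)^2*(y2 0)*(y2 2)*k1*k3*r*x + (-18)*(y1 3)^2*(y2 0)*(y2 2)*k2*k3*r*x + 18*(y1 3)^2*(y2 0)^2*k1*k2*k3^2 + 9*(y1 3)^2*(y2 0)^2*k1^2*k3^2 + 9*(y1 3)^2*(y2 0)^2*k2^2*k3^2 + (-18)*(y1 3)^2*(y2 1)*(y2 2)*k1*k3*r*y + (-18)*(y1 3)^2*(y2 1)*(y2 2)*k2*k3*r*y + 9*(y1 3)^2*(y2 1)^2*k1*k3*y^2 + 9*(y1 3)^2*(y2 1)^2*k2*k3*y^2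 + 18*(y1 3)^2*(y2 2)^2*k1*k2*k3^2 + 9*(y1 3)^2*(y2 2)^2*k1*k3*y^2 + 9*(y1 3)^2*(y2 2)^2*k1^2*k3^2 + 9*(y1 3)^2*(y2 2)^2*k2*k3*y^2 + 9*(y1 3)^2*(y2 2)^2*k2^2*k3^2) * hy

set_option maxHeartbeats 4000000 in
/-- Section 3.5: for `A = κ₁A^{Ψ₁} + κ₂A^{Ψ₂} + κ₃A^{Ψ₃}` with the standard
paraquaternionic structure and distinct eigenvalues `3κ₁, −3κ₂, −3κ₃`, the model is
null Jordan Osserman if and only if `κ₂κ₃(κ₁+κ₂)(κ₁+κ₃) > 0`. -/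
theorem type_Ia_distinct_null_jordan_osserman_iff (κ₁ κ₂ κ₃ : ℝ)
    (h12 : κ₁ + κ₂ ≠ 0) (h13 : κ₁ + κ₃ ≠ 0) (h23 : κ₂ ≠ κ₃)
    (A : V4 → V4 → V4 → V4 → ℝ)
    (hA : A = fun x y z w => κ₁ * AcurvPsi psi1 x y z w + κ₂ * AcurvPsi psi2 x y z w
      + κ₃ * AcurvPsi psi3 x y z w) :
    NullJordanOsserman A ↔ 0 < κ₂ * κ₃ * (κ₁ + κ₂) * (κ₁ + κ₃) := by
  subst hA
  constructor
  · intro hNJO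
    by_contra hneg
    rcases eq_or_ne κ₂ 0 with hk2 | hk2
    · -- κ₂ = 0 : degenerate at (1,0,1,0), nondegenerate at (1,0,0,1)
      have hk1 : κ₁ ≠ 0 := fun h => h12 (by rw [h, hk2, add_zero])
      have hk3 : κ₃ ≠ 0 := fun h => h23 (hk2.trans h.symm)
      have hsim := hNJO ![1,0,1,0] ![1,0,0,1]
        (fun h => by simpa using congrFun h 0)
        (fun h => by simpa using congrFun h 0)
        (by simp [nip]) (by simp [nip])
      rw [jacobi_eq κ₁ κ₂ κ₃, jacobi_eq κ₁ κ₂ κ₃] at hsim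
      have hdb : (cmt (JM κ₁ κ₂ κ₃ ![1,0,0,1]) ![1,0,0,0] ![0,1,0,0]).det
          = 9*(κ₃*(κ₁+κ₂)) := by
        rw [det_cmt_e01]; simp
      obtain ⟨z1, z2, hz⟩ := cmt_transfer hsim (by
        rw [hdb, isUnit_iff_ne_zero]
        intro h
        rcases mul_eq_zero.mp h with h' | h'
        · norm_num at h'
        · rcases mul_eq_zero.mp h' with h'' | h'' <;> [exact hk3 h''; exact h12 h''])
      rw [caseA κ₁ κ₂ κ₃ hk2 z1 z2] at hz
      simpa using hz
    rcases eq_or_ne κ₃ 0 with hk3 | hk3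
    · -- κ₃ = 0
      have hk1 : κ₁ ≠ 0 := fun h => h13 (by rw [h, hk3, add_zero])
      have hsim := hNJO ![1,0,0,1] ![1,0,1,0]
        (fun h => by simpa using congrFun h 0)
        (fun h => by simpa using congrFun h 0)
        (by simp [nip]) (by simp [nip])
      rw [jacobi_eq κ₁ κ₂ κ₃, jacobi_eq κ₁ κ₂ κ₃] at hsim
      have hdb : (cmt (JM κ₁ κ₂ κ₃ ![1,0,1,0]) ![1,0,0,0] ![0,1,0,0]).det
          = 9*(κ₂*(κ₁+κ₃)) := by
        rw [det_cmt_e01]; simp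
      obtain ⟨z1, z2, hz⟩ := cmt_transfer hsim (by
        rw [hdb, isUnit_iff_ne_zero]
        intro h
        rcases mul_eq_zero.mp h with h' | h'
        · norm_num at h'
        · rcases mul_eq_zero.mp h' with h'' | h'' <;> [exact hk2 h''; exact h13 h''])
      rw [caseB κ₁ κ₂ κ₃ hk3 z1 z2] at hz
      simpa using hz
    · -- κ₂ ≠ 0, κ₃ ≠ 0 : product is negative
      have hne : κ₂ * κ₃ * (κ₁ + κ₂) * (κ₁ + κ₃) ≠ 0 :=
        mul_ne_zero (mul_ne_zero (mul_ne_zero hk2 hk3) h12) h13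
      have hlt : κ₂ * κ₃ * (κ₁ + κ₂) * (κ₁ + κ₃) < 0 :=
        lt_of_le_of_ne (not_lt.mp hneg) hne
      have hdd : (κ₂*(κ₁+κ₃)) * (κ₃*(κ₁+κ₂)) < 0 := by
        have e : κ₂ * κ₃ * (κ₁ + κ₂) * (κ₁ + κ₃) = (κ₂*(κ₁+κ₃)) * (κ₃*(κ₁+κ₂)) := by ring
        rwa [e] at hlt
      rcases mul_neg_iff.mp hdd with ⟨hd0, hd1⟩ | ⟨hd0, hd1⟩
      · -- d₀ > 0 > d₁ : case C
        set x := Real.sqrt (-(κ₃*(κ₁+κ₂))) with hxdef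
        set y := Real.sqrt (κ₂*(κ₁+κ₃)) with hydef
        set r := Real.sqrt (x^2 + y^2) with hrdef
        have hx : x^2 = -(κ₃*(κ₁+κ₂)) := Real.sq_sqrt (by linarith)
        have hy : y^2 = κ₂*(κ₁+κ₃) := Real.sq_sqrt hd0.le
        have hr : r^2 = x^2 + y^2 := Real.sq_sqrt (by positivity)
        have hrpos : 0 < r := Real.sqrt_pos.mpr (by nlinarith)
        have hsim := hNJO ![r,0,x,y] ![1,0,1,0]
          (fun h => by have := congrFun h 0; simp at this; exact hrpos.ne' this)
          (fun h => by simpa using congrFun h 0)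
          (by show nip _ _ = 0; simp [nip]; linear_combination -hr)
          (by simp [nip])
        rw [jacobi_eq κ₁ κ₂ κ₃, jacobi_eq κ₁ κ₂ κ₃] at hsim
        have hdb : (cmt (JM κ₁ κ₂ κ₃ ![1,0,1,0]) ![1,0,0,0] ![0,1,0,0]).det
            = 9*(κ₂*(κ₁+κ₃)) := by
          rw [det_cmt_e01]; simp
        obtain ⟨z1, z2, hz⟩ := cmt_transfer hsim (by
          rw [hdb, isUnit_iff_ne_zero]; positivity <;> skip)
        rw [caseC κ₁ κ₂ κ₃ x y r hx hy hr z1 z2] at hz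
        simpa using hz
      · -- d₀ < 0 < d₁ : case D
        set x := Real.sqrt (κ₃*(κ₁+κ₂)) with hxdef
        set y := Real.sqrt (-(κ₂*(κ₁+κ₃))) with hydef
        set r := Real.sqrt (x^2 + y^2) with hrdef
        have hx : x^2 = κ₃*(κ₁+κ₂) := Real.sq_sqrt hd1.le
        have hy : y^2 = -(κ₂*(κ₁+κ₃)) := Real.sq_sqrt (by linarith)
        have hr : r^2 = x^2 + y^2 := Real.sq_sqrt (by positivity)
        have hrpos : 0 < r := Real.sqrt_pos.mpr (by nlinarith)
        have hsim := hNJO ![r,0,x,y] ![1,0,0,1]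
          (fun h => by have := congrFun h 0; simp at this; exact hrpos.ne' this)
          (fun h => by simpa using congrFun h 0)
          (by show nip _ _ = 0; simp [nip]; linear_combination -hr)
          (by simp [nip])
        rw [jacobi_eq κ₁ κ₂ κ₃, jacobi_eq κ₁ κ₂ κ₃] at hsim
        have hdb : (cmt (JM κ₁ κ₂ κ₃ ![1,0,0,1]) ![1,0,0,0] ![0,1,0,0]).det
            = 9*(κ₃*(κ₁+κ₂)) := by
          rw [det_cmt_e01]; simp
        obtain ⟨z1, z2, hz⟩ := cmt_transfer hsim (by
          rw [hdb, isUnit_iff_ne_zero]; positivity <;> skip)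
        rw [caseD κ₁ κ₂ κ₃ x y r hx hy hr z1 z2] at hz
        simpa using hz
  · intro hpos u w hu hw hnu hnw
    have main : ∀ v : V4, v ≠ 0 → nip v v = 0 → SimilarM4 (JM κ₁ κ₂ κ₃ v) NN := by
      intro v hv hnv
      apply sim_NN (JM_sq κ₁ κ₂ κ₃ v hnv) ![1,0,0,0] ![0,1,0,0]
      rw [det_cmt_e01, isUnit_iff_ne_zero]
      have h0 : -(v 0 * v 0) - v 1 * v 1 + v 2 * v 2 + v 3 * v 3 = 0 := hnv
      have hn' : v 0^2 + v 1^2 = v 2^2 + v 3^2 := by linear_combination -h0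
      have h23p : 0 < v 2^2 + v 3^2 := by
        by_contra hc
        push_neg at hc
        have h2 : v 2 = 0 := by nlinarith [sq_nonneg (v 2), sq_nonneg (v 3)]
        have h3 : v 3 = 0 := by nlinarith [sq_nonneg (v 2), sq_nonneg (v 3)]
        have ha : v 0 = 0 := by nlinarith [sq_nonneg (v 0), sq_nonneg (v 1)]
        have hb : v 1 = 0 := by nlinarith [sq_nonneg (v 0), sq_nonneg (v 1)]
        exact hv (funext fun i => by fin_cases i <;> assumption)
      have hab : (v 0*v 2 + v 1*v 3)^2 + (v 0*v 3 - v 1*v 2)^2 = (v 2^2 + v 3^2)^2 := by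
        linear_combination (v 2^2 + v 3^2) * hn'
      have habp : 0 < (v 0*v 2 + v 1*v 3)^2 + (v 0*v 3 - v 1*v 2)^2 := by
        rw [hab]; positivity
      have hone : 0 < (v 0*v 2 + v 1*v 3)^2 ∨ 0 < (v 0*v 3 - v 1*v 2)^2 := by
        by_contra hc
        push_neg at hc
        nlinarith [sq_nonneg (v 0*v 2 + v 1*v 3), sq_nonneg (v 0*v 3 - v 1*v 2)]
      have hprod' : 0 < (κ₂*(κ₁+κ₃)) * (κ₃*(κ₁+κ₂)) := by
        have e : κ₂ * κ₃ * (κ₁ + κ₂) * (κ₁ + κ₃) = (κ₂*(κ₁+κ₃)) * (κ₃*(κ₁+κ₂)) := by ring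
        rwa [e] at hpos
      rcases mul_pos_iff.mp hprod' with ⟨hd0, hd1⟩ | ⟨hd0, hd1⟩
      · apply ne_of_gt
        rcases hone with h | h
        · nlinarith [mul_pos hd0 h, mul_nonneg hd1.le (sq_nonneg (v 0*v 3 - v 1*v 2))]
        · nlinarith [mul_pos hd1 h, mul_nonneg hd0.le (sq_nonneg (v 0*v 2 + v 1*v 3))]
      · apply ne_of_lt
        rcases hone with h | h
        · nlinarith [mul_neg_of_neg_of_pos hd0 h, sq_nonneg (v 0*v 3 - v 1*v 2), hd1.le]
        · nlinarith [mul_neg_of_neg_of_pos hd1 h, sq_nonneg (v 0*v 2 + v 1*v 3), hd0.le]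
    rw [jacobi_eq κ₁ κ₂ κ₃, jacobi_eq κ₁ κ₂ κ₃]
    exact similar_trans (main u hu hnu) (similar_symm (main w hw hnw))
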